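/- arXiv:1910.00644 — 7 statements merged into one kernel-verified Lean document; each statement's English description precedes it below -/
import Mathlib

section
/- Let G be a finite almost simple group with socle G₀ (i.e. G₀ is a nonabelian simple normal subgroup of G whose centralizer in G is trivial). Suppose G = HK is an exact factorization, i.e. H and K are subgroups of G with H ∩ K = 1 and every element of G is a product hk with h ∈ H and k ∈ K. Then the order of H ∩ G₀ divides the index of K ∩ G₀ in G₀. -/
/-- If a finite group `α` acts freely on `β`, then `|α|` divides `|β|`. -/
private lemma card_dvd_of_free_action {α β : Type*} [Group α] [MulAction α β] [Finite β]
    (hfree : ∀ (a : α) (b : β), a • b = b → a = 1) :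
    Nat.card α ∣ Nat.card β := by
  classical
  have hstab : ∀ b : β, MulAction.stabilizer α b = ⊥ := by
    intro b
    ext a
    simp only [MulAction.mem_stabilizer_iff, Subgroup.mem_bot]
    exact ⟨fun h => hfree a b h, fun h => by simp [h]⟩
  have e : β ≃ (MulAction.orbitRel.Quotient α β) × α := by
    refine (MulAction.selfEquivSigmaOrbitsQuotientStabilizer α β).trans ?_
    refine (Equiv.sigmaCongrRight fun ω => ?_).trans
      (Equiv.sigmaEquivProd (MulAction.orbitRel.Quotient α β) α)
    rw [hstab]
    exact (QuotientGroup.quotientBot (G := α)).toEquiv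
  rw [Nat.card_congr e, Nat.card_prod]
  exact dvd_mul_left _ _

/-- Let `G` be a finite almost simple group with socle `G₀` (a nonabelian simple
normal subgroup with trivial centralizer in `G`). If `G = HK` is an exact
factorization, then `|H ∩ G₀|` divides the index of `K ∩ G₀` in `G₀`. -/
theorem card_inf_dvd_index_of_exact_factorization {G : Type*} [Group G] [Finite G]
    (G₀ H K : Subgroup G) (hnorm : G₀.Normal) (hsimple : IsSimpleGroup G₀)
    (hnonabelian : ¬ ∀ x y : G₀, x * y = y * x)
    (hcent : Subgroup.centralizer (G₀ : Set G) = ⊥)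
    (hdisj : H ⊓ K = ⊥)
    (hfact : ∀ g : G, ∃ h ∈ H, ∃ k ∈ K, g = h * k) :
    Nat.card ↥(H ⊓ G₀) ∣ ((K ⊓ G₀).subgroupOf G₀).index := by
  set K' : Subgroup G₀ := (K ⊓ G₀).subgroupOf G₀ with hK'
  set H' : Subgroup G₀ := (H ⊓ G₀).subgroupOf G₀ with hH'
  have hcardH : Nat.card ↥(H ⊓ G₀) = Nat.card H' :=
    (Nat.card_congr (Subgroup.subgroupOfEquivOfLe (inf_le_right : H ⊓ G₀ ≤ G₀)).toEquiv).symm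
  rw [hcardH, Subgroup.index]
  -- `H'` acts freely on `G₀ ⧸ K'`
  apply card_dvd_of_free_action (α := H') (β := G₀ ⧸ K')
  intro a b hab
  induction b using QuotientGroup.induction_on with
  | H g =>
    have hmem : ((a : G₀) * g)⁻¹ * g ∈ K' := by
      rw [← QuotientGroup.eq]
      exact hab
    -- unfold to the ambient group
    have hmemG : ((g : G)⁻¹ * ((a : G₀) : G)⁻¹ * (g : G)) ∈ K := by
      have h2 := (Subgroup.mem_subgroupOf.mp hmem).1
      simpa [mul_assoc, mul_inv_rev] using h2
    obtain ⟨h₀, hh₀, k₀, hk₀, hg⟩ := hfact (g : G)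
    have key : h₀⁻¹ * ((a : G₀) : G)⁻¹ * h₀ ∈ K := by
      have : k₀ * ((g : G)⁻¹ * ((a : G₀) : G)⁻¹ * (g : G)) * k₀⁻¹ ∈ K :=
        K.mul_mem (K.mul_mem hk₀ hmemG) (K.inv_mem hk₀)
      have heq : k₀ * ((g : G)⁻¹ * ((a : G₀) : G)⁻¹ * (g : G)) * k₀⁻¹
          = h₀⁻¹ * ((a : G₀) : G)⁻¹ * h₀ := by
        rw [hg]; group
      rwa [heq] at this
    have keyH : h₀⁻¹ * ((a : G₀) : G)⁻¹ * h₀ ∈ H := by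
      have haH : ((a : G₀) : G) ∈ H := (Subgroup.mem_subgroupOf.mp a.2).1
      exact H.mul_mem (H.mul_mem (H.inv_mem hh₀) (H.inv_mem haH)) hh₀
    have : h₀⁻¹ * ((a : G₀) : G)⁻¹ * h₀ ∈ H ⊓ K := ⟨keyH, key⟩
    rw [hdisj, Subgroup.mem_bot] at this
    have haone : ((a : G₀) : G) = 1 := by
      have hinv : ((a : G₀) : G)⁻¹ = 1 := by
        calc ((a : G₀) : G)⁻¹ = h₀ * (h₀⁻¹ * ((a : G₀) : G)⁻¹ * h₀) * h₀⁻¹ := by group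
        _ = 1 := by rw [this]; group
      simpa using inv_eq_one.mp hinv
    have : (a : G₀) = 1 := Subtype.ext haone
    exact Subtype.ext this
end

section
/- Let F be a finite field with q elements, let n ≥ 2, and fix a nonzero vector v ∈ F^n. Suppose H and K are subgroups of GL_n(F) such that every element of GL_n(F) is a product hk with h ∈ H, k ∈ K, and such that every element of K maps v into the F-span of v (i.e. K is contained in the stabilizer of the line through v). Then (q^n − 1)/(q − 1) divides the order of H. -/
open scoped LinearAlgebra.Projectivization
open Projectivization

section aux

variable {G : Type*} [Group G]

lemma index_dvd_of_factorization {H P : Subgroup G}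
    (hfact : ∀ g : G, ∃ h ∈ H, ∃ k ∈ P, g = h * k) : P.index ∣ Nat.card H := by
  classical
  have key : Function.Bijective
      (fun x : H ⧸ P.subgroupOf H => Quotient.map' (Subtype.val : H → G)
        (fun a b hab => by
          rw [QuotientGroup.leftRel_apply] at hab ⊢
          simpa [Subgroup.mem_subgroupOf] using hab) x) := by
    constructor
    · intro x y h
      induction x using Quotient.inductionOn' with
      | h a =>
        induction y using Quotient.inductionOn' with
        | h b =>
          simp only [Quotient.map'_mk''] at h
          apply Quotient.sound'
          rw [QuotientGroup.leftRel_apply]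
          have := Quotient.exact' h
          rw [QuotientGroup.leftRel_apply] at this
          simpa [Subgroup.mem_subgroupOf] using this
    · intro x
      induction x using Quotient.inductionOn' with
      | h g =>
        obtain ⟨h, hh, k, hk, rfl⟩ := hfact g
        refine ⟨QuotientGroup.mk (⟨h, hh⟩ : H), ?_⟩
        simp only [Quotient.map'_mk'']
        apply Quotient.sound'
        rw [QuotientGroup.leftRel_apply]
        simpa using hk
  have hcard : Nat.card (G ⧸ P) = Nat.card (H ⧸ P.subgroupOf H) :=
    (Nat.card_congr (Equiv.ofBijective _ key)).symm
  have : P.index = (P.subgroupOf H).index := by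
    rw [Subgroup.index, Subgroup.index, hcard]
  rw [this]
  exact Subgroup.index_dvd_card _

end aux

section lin

variable {K V : Type*} [Field K] [AddCommGroup V] [Module K V]

lemma exists_linearEquiv_apply_eq {u w : V} (hu : u ≠ 0) (hw : w ≠ 0) :
    ∃ e : V ≃ₗ[K] V, e u = w := by
  classical
  have hiu := LinearIndepOn.singleton (R := K) (v := id) (i := u) hu
  have hiw := LinearIndepOn.singleton (R := K) (v := id) (i := w) hw
  have hu' : u ∈ hiu.extend (Set.subset_univ _) := hiu.subset_extend _ rfl
  have hw' : w ∈ hiw.extend (Set.subset_univ _) := hiw.subset_extend _ rfl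
  set bu := Module.Basis.extend hiu with hbu
  set bw := Module.Basis.extend hiw with hbw
  set ind : _ ≃ _ := (bu.indexEquiv bw).trans
    (Equiv.swap (bu.indexEquiv bw ⟨u, hu'⟩) ⟨w, hw'⟩) with hind
  refine ⟨bu.equiv bw ind, ?_⟩
  have key : (bu.equiv bw ind) (bu ⟨u, hu'⟩) = w := by
    rw [Module.Basis.equiv_apply]
    have : ind ⟨u, hu'⟩ = ⟨w, hw'⟩ := by
      simp [hind, Equiv.swap_apply_left]
    rw [this]
    exact Module.Basis.extend_apply_self hiw ⟨w, hw'⟩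
  rwa [Module.Basis.extend_apply_self hiu ⟨u, hu'⟩] at key

end lin

section action

variable {K : Type*} [Field K] {n : Type*} [DecidableEq n] [Fintype n]

noncomputable instance glProjAction :
    MulAction (Matrix.GeneralLinearGroup n K) (ℙ K (n → K)) where
  smul g x := x.map ((g : Matrix n n K).mulVecLin)
    (LinearMap.GeneralLinearGroup.toLinearEquiv (Matrix.GeneralLinearGroup.toLin g)).injective
  one_smul x := by
    induction x using Projectivization.ind with
    | h v hv =>
      show Projectivization.map _ _ _ = _
      change Projectivization.mk _ _ _ = _
      congr 1
      simp
  mul_smul a b x := by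
    induction x using Projectivization.ind with
    | h v hv =>
      show Projectivization.map _ _ _ = Projectivization.map _ _ (Projectivization.map _ _ _)
      change Projectivization.mk _ _ _ = Projectivization.mk _ _ _
      congr 1
      simp [Matrix.mulVec_mulVec]

lemma glProj_smul_mk (g : Matrix.GeneralLinearGroup n K) (v : n → K) (hv : v ≠ 0) :
    g • (Projectivization.mk K v hv) =
      Projectivization.mk K ((g : Matrix n n K).mulVec v)
        (by
          intro h
          apply hv
          have := (LinearMap.GeneralLinearGroup.toLinearEquiv
            (Matrix.GeneralLinearGroup.toLin g)).injective (a₁ := v) (a₂ := 0)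
          simp only [map_zero] at this
          exact this h) := by
  show Projectivization.map _ _ _ = _
  rfl

noncomputable instance glProjPretransitive :
    MulAction.IsPretransitive (Matrix.GeneralLinearGroup n K) (ℙ K (n → K)) := by
  constructor
  intro x y
  induction x using Projectivization.ind with
  | h u hu =>
    induction y using Projectivization.ind with
    | h w hw =>
      obtain ⟨e, he⟩ := exists_linearEquiv_apply_eq (K := K) hu hw
      refine ⟨(Matrix.GeneralLinearGroup.toLin).symm
        ((LinearMap.GeneralLinearGroup.generalLinearEquiv K (n → K)).symm e), ?_⟩
      rw [glProj_smul_mk]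
      have hcoe : ∀ z : n → K,
          ((((Matrix.GeneralLinearGroup.toLin).symm
            ((LinearMap.GeneralLinearGroup.generalLinearEquiv K (n → K)).symm e) :
              Matrix.GeneralLinearGroup n K) : Matrix n n K)).mulVec z = e z := by
        intro z
        have h1 : Matrix.GeneralLinearGroup.toLin
            ((Matrix.GeneralLinearGroup.toLin).symm
              ((LinearMap.GeneralLinearGroup.generalLinearEquiv K (n → K)).symm e)) =
            (LinearMap.GeneralLinearGroup.generalLinearEquiv K (n → K)).symm e :=
          MulEquiv.apply_symm_apply _ _
        calc _ = (Matrix.mulVecLin _) z := rfl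
        _ = e z := by
          rw [← Matrix.GeneralLinearGroup.coe_toLin, h1]
          have := LinearMap.GeneralLinearGroup.coeFn_generalLinearEquiv
            ((LinearMap.GeneralLinearGroup.generalLinearEquiv K (n → K)).symm e)
          rw [MulEquiv.apply_symm_apply] at this
          exact congrFun this z
      simp_rw [hcoe, he]

end action

section card

variable (K V : Type*) [Field K] [Fintype K] [AddCommGroup V] [Module K V] [Fintype V]
  [DecidableEq V]

lemma card_proj_mul : Nat.card (ℙ K V) * (Fintype.card K - 1) = Fintype.card V - 1 := by
  classical
  have hfin : Finite (ℙ K V) := Quotient.finite _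
  letI : Fintype (ℙ K V) := Fintype.ofFinite _
  have hfiber : ∀ x : ℙ K V,
      Nat.card {a : {v : V // v ≠ 0} // Projectivization.mk' K a = x} = Fintype.card K - 1 := by
    intro x
    induction x using Projectivization.ind with
    | h u hu =>
      have e : Kˣ ≃
          {a : {v : V // v ≠ 0} // Projectivization.mk' K a = Projectivization.mk K u hu} := by
        refine Equiv.ofBijective (fun c => ⟨⟨(c : K) • u, smul_ne_zero (Units.ne_zero c) hu⟩, ?_⟩)
          ⟨?_, ?_⟩
        · rw [Projectivization.mk'_eq_mk]
          exact (Projectivization.mk_eq_mk_iff K _ _ _ hu).2 ⟨c, rfl⟩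
        · intro c c' h
          have h2 : (c : K) • u = (c' : K) • u := by
            simpa [Subtype.ext_iff] using h
          exact Units.ext (smul_left_injective K hu h2)
        · rintro ⟨⟨a, ha⟩, h⟩
          rw [Projectivization.mk'_eq_mk] at h
          obtain ⟨d, hd⟩ := (Projectivization.mk_eq_mk_iff K _ _ _ hu).1 h
          exact ⟨d, by simpa [Subtype.ext_iff, Units.smul_def] using hd⟩
      rw [← Nat.card_congr e, Nat.card_eq_fintype_card, Fintype.card_units]
  have hsig := Nat.card_congr (Equiv.sigmaFiberEquiv (Projectivization.mk' K :
    {v : V // v ≠ 0} → ℙ K V))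
  have hcardnz : Nat.card {v : V // v ≠ 0} = Fintype.card V - 1 := by
    rw [Nat.card_eq_fintype_card]
    have := Fintype.card_subtype_compl (fun v : V => v = 0)
    simpa [Fintype.card_subtype_eq] using this
  rw [← hcardnz, ← hsig]
  conv_rhs => rw [Nat.card_eq_fintype_card, Fintype.card_sigma]
  have hf : ∀ y : ℙ K V, Fintype.card {x : {v : V // v ≠ 0} // Projectivization.mk' K x = y}
      = Fintype.card K - 1 := fun y => by
    rw [Fintype.card_eq_nat_card]; exact hfiber y
  simp only [hf]
  rw [Finset.sum_const, smul_eq_mul, Finset.card_univ, Nat.card_eq_fintype_card]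

end card

/-- In a factorization `GLₙ(q) = HK` in which `K` stabilizes the line spanned by
a nonzero vector `v`, the number `(qⁿ - 1)/(q - 1)` of lines divides `|H|`. -/
theorem lines_dvd_card_of_factorization {F : Type*} [Field F] [Fintype F]
    (q n : ℕ) (hq : Fintype.card F = q) (hn : 2 ≤ n)
    (v : Fin n → F) (hv : v ≠ 0)
    (H K : Subgroup (Matrix.GeneralLinearGroup (Fin n) F))
    (hfact : ∀ g : Matrix.GeneralLinearGroup (Fin n) F,
      ∃ h ∈ H, ∃ k ∈ K, g = h * k)
    (hK : ∀ k ∈ K, (k : Matrix (Fin n) (Fin n) F).mulVec v ∈ Submodule.span F {v}) :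
    (q ^ n - 1) / (q - 1) ∣ Nat.card H := by
  classical
  have hq2 : 2 ≤ q := by rw [← hq]; exact Fintype.one_lt_card
  set L : ℙ F (Fin n → F) := Projectivization.mk F v hv with hL
  set P := MulAction.stabilizer (Matrix.GeneralLinearGroup (Fin n) F) L with hP
  have hKP : K ≤ P := by
    intro k hk
    have hmem := hK k hk
    rw [Submodule.mem_span_singleton] at hmem
    obtain ⟨a, ha⟩ := hmem
    have hnz : (k : Matrix (Fin n) (Fin n) F).mulVec v ≠ 0 := by
      intro h0
      apply hv
      apply (LinearMap.GeneralLinearGroup.toLinearEquiv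
        (Matrix.GeneralLinearGroup.toLin k)).injective (a₂ := 0)
      simpa using h0
    have ha0 : a ≠ 0 := by
      intro h0
      apply hnz
      rw [← ha, h0, zero_smul]
    show k • L = L
    rw [hL, glProj_smul_mk]
    exact (Projectivization.mk_eq_mk_iff F _ _ _ hv).2
      ⟨Units.mk0 a ha0, by simpa using ha⟩
  have hfact' : ∀ g : Matrix.GeneralLinearGroup (Fin n) F,
      ∃ h ∈ H, ∃ k ∈ P, g = h * k := by
    intro g
    obtain ⟨h, hh, k, hk, rfl⟩ := hfact g
    exact ⟨h, hh, k, hKP hk, rfl⟩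
  have hdvd := index_dvd_of_factorization hfact'
  have hidx : P.index = Nat.card (ℙ F (Fin n → F)) :=
    MulAction.index_stabilizer_of_transitive _ L
  have hmul := card_proj_mul F (Fin n → F)
  rw [hq] at hmul
  have hcardV : Fintype.card (Fin n → F) = q ^ n := by
    rw [Fintype.card_fun, hq, Fintype.card_fin]
  rw [hcardV] at hmul
  have hdiv : (q ^ n - 1) / (q - 1) = Nat.card (ℙ F (Fin n → F)) :=
    Nat.div_eq_of_eq_mul_left (by omega) hmul.symm
  rw [hdiv, ← hidx]
  exact hdvd
end

section
/- Let K ⊆ L be finite fields with |K| = q and [L : K] = m ≥ 2, and suppose there exists a primitive prime divisor r of q^m − 1, i.e. a prime r dividing q^m − 1 such that r does not divide q^i − 1 for 1 ≤ i < m. Let G = Lˣ ⋊ Gal(L/K) be the semidirect product of the unit group Lˣ by the Galois group Gal(L/K) (with its natural action on Lˣ), acting on L by (a, σ)·x = a·σ(x). If A is a nilpotent subgroup of G which is transitive on L \ {0} (i.e. for all nonzero x, y ∈ L there exists (a, σ) ∈ A with a·σ(x) = y), then A equals the subgroup Lˣ (the image of Lˣ under the canonical inclusion into G); in particular A is cyclic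 of order q^m − 1. -/
open Module

section AuxNilpotent

private theorem aux_pow_comm {G : Type*} [Group G] (x y : G)
    (hz : x * y * x⁻¹ * y⁻¹ ∈ Subgroup.center G) :
    (x * y * x⁻¹ * y⁻¹) ^ orderOf y = 1 := by
  set z := x * y * x⁻¹ * y⁻¹ with hzdef
  have hcz : Commute z y := (Subgroup.mem_center_iff.mp hz y).symm
  have h1 : x * y * x⁻¹ = z * y := by rw [hzdef]; group
  calc z ^ orderOf y = z ^ orderOf y * y ^ orderOf y := by
        rw [pow_orderOf_eq_one, mul_one]
    _ = (z * y) ^ orderOf y := (hcz.mul_pow _).symm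
    _ = (x * y * x⁻¹) ^ orderOf y := by rw [h1]
    _ = x * y ^ orderOf y * x⁻¹ := conj_pow
    _ = 1 := by rw [pow_orderOf_eq_one, mul_one, mul_inv_cancel]

/-- In a nilpotent group, elements of coprime orders commute. -/
private theorem commute_of_coprime_orderOf {G : Type*} [Group G] [Group.IsNilpotent G]
    (x y : G) (h : Nat.Coprime (orderOf x) (orderOf y)) : Commute x y := by
  revert x y
  refine nilpotent_center_quotient_ind
    (P := fun G _ _ => ∀ x y : G, Nat.Coprime (orderOf x) (orderOf y) → Commute x y)
    G ?_ ?_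
  · intro G _ _ x y _
    exact Subsingleton.elim _ _
  · intro G _ _ ih x y h
    set π := QuotientGroup.mk' (Subgroup.center G) with hπ
    have hxy : Commute (π x) (π y) :=
      ih _ _ ((h.coprime_dvd_left (orderOf_map_dvd π x)).coprime_dvd_right
        (orderOf_map_dvd π y))
    have hin : x * y * x⁻¹ * y⁻¹ ∈ MonoidHom.ker π := by
      rw [MonoidHom.mem_ker]
      have h0 : π x * π y * (π x)⁻¹ * (π y)⁻¹ = 1 := by rw [hxy.eq]; group
      simpa [map_mul, map_inv] using h0
    rw [QuotientGroup.ker_mk'] at hin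
    have h1 : (x * y * x⁻¹ * y⁻¹) ^ orderOf y = 1 := aux_pow_comm x y hin
    have hin' : y * x * y⁻¹ * x⁻¹ ∈ Subgroup.center G := by
      have e : y * x * y⁻¹ * x⁻¹ = (x * y * x⁻¹ * y⁻¹)⁻¹ := by group
      rw [e]; exact Subgroup.inv_mem _ hin
    have h2 : (y * x * y⁻¹ * x⁻¹) ^ orderOf x = 1 := aux_pow_comm y x hin'
    have h2' : (x * y * x⁻¹ * y⁻¹) ^ orderOf x = 1 := by
      have e : x * y * x⁻¹ * y⁻¹ = (y * x * y⁻¹ * x⁻¹)⁻¹ := by group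
      rw [e, inv_pow, h2, inv_one]
    have hd : orderOf (x * y * x⁻¹ * y⁻¹) ∣ Nat.gcd (orderOf x) (orderOf y) :=
      Nat.dvd_gcd (orderOf_dvd_of_pow_eq_one h2') (orderOf_dvd_of_pow_eq_one h1)
    rw [Nat.Coprime] at h
    rw [h, Nat.dvd_one, orderOf_eq_one_iff] at hd
    have e1 : x * y * x⁻¹ = y := by
      have := hd
      rwa [mul_inv_eq_one] at this
    show x * y = y * x
    calc x * y = x * y * x⁻¹ * x := by group
      _ = y * x := by rw [e1]

end AuxNilpotent

section AuxField

/-- A primitive prime divisor of `q^m - 1` exceeds `m`. -/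
private theorem aux_m_lt_r {q m r : ℕ} (hq2 : 2 ≤ q) (hm0 : 0 < m) (hr : r.Prime)
    (hrdvd : r ∣ q ^ m - 1) (hppd : ∀ i : ℕ, 1 ≤ i → i < m → ¬ r ∣ q ^ i - 1) : m < r := by
  haveI : Fact r.Prime := ⟨hr⟩
  haveI : NeZero r := ⟨hr.pos.ne'⟩
  have hqm1 : 1 ≤ q ^ m := Nat.one_le_pow _ _ (by omega)
  have h0 : ((q ^ m - 1 : ℕ) : ZMod r) = 0 := (ZMod.natCast_eq_zero_iff _ _).mpr hrdvd
  rw [Nat.cast_sub hqm1] at h0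
  push_cast at h0
  have hu1 : (q : ZMod r) ^ m = 1 := by rwa [sub_eq_zero] at h0
  obtain ⟨u, hu⟩ : IsUnit (q : ZMod r) := IsUnit.of_pow_eq_one hu1 (by omega)
  have hum : u ^ m = 1 := by
    ext
    rw [Units.val_pow_eq_pow_val, hu, hu1, Units.val_one]
  have hd : orderOf u ∣ m := orderOf_dvd_of_pow_eq_one hum
  have hd1 : 1 ≤ orderOf u := orderOf_pos u
  have hdm : orderOf u = m := by
    by_contra hne
    have hlt : orderOf u < m := lt_of_le_of_ne (Nat.le_of_dvd hm0 hd) hne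
    refine hppd (orderOf u) hd1 hlt ?_
    have hpow : (q : ZMod r) ^ orderOf u = 1 := by
      rw [← hu, ← Units.val_pow_eq_pow_val, pow_orderOf_eq_one, Units.val_one]
    have h1q : 1 ≤ q ^ orderOf u := Nat.one_le_pow _ _ (by omega)
    rw [← ZMod.natCast_eq_zero_iff, Nat.cast_sub h1q]
    push_cast
    rw [hpow, sub_self]
  have hdvd2 : m ∣ r - 1 := by
    rw [← hdm]
    have h3 := orderOf_dvd_card (x := u)
    rwa [ZMod.card_units_eq_totient, Nat.totient_prime hr] at h3
  have : m ≤ r - 1 := Nat.le_of_dvd (by have := hr.two_le; omega) hdvd2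
  have := hr.two_le
  omega

/-- If an algebra automorphism of a finite field fixes a unit of order a primitive
prime divisor, it is the identity. -/
private theorem aux_fix_eq_one {K L : Type*} [Field K] [Field L] [Algebra K L]
    [Fintype K] [Fintype L] {q m r : ℕ}
    (hq : Fintype.card K = q) (hm : Module.finrank K L = m)
    (hppd : ∀ i : ℕ, 1 ≤ i → i < m → ¬ r ∣ q ^ i - 1)
    (σ : L ≃ₐ[K] L) (v : Lˣ) (hv : orderOf v = r) (_hr : r.Prime)
    (hfix : σ (v : L) = (v : L)) : σ = 1 := by
  by_contra hσ
  obtain ⟨x, hx⟩ : ∃ x : L, σ x ≠ x := by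
    by_contra hcon
    push_neg at hcon
    exact hσ (AlgEquiv.ext hcon)
  haveI : FiniteDimensional K L := Module.Finite.of_finite
  let F : IntermediateField K L :=
  { carrier := {y : L | σ y = y}
    mul_mem' := fun {a b} ha hb => by
      simp only [Set.mem_setOf_eq, map_mul] at *
      rw [ha, hb]
    one_mem' := map_one σ
    add_mem' := fun {a b} ha hb => by
      simp only [Set.mem_setOf_eq, map_add] at *
      rw [ha, hb]
    zero_mem' := map_zero σ
    algebraMap_mem' := σ.commutes
    inv_mem' := fun a ha => by
      simp only [Set.mem_setOf_eq, map_inv₀] at *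
      rw [ha] }
  have hmem : ∀ y : L, y ∈ F ↔ σ y = y := fun y => Iff.rfl
  haveI : Fintype F := Fintype.ofFinite F
  have hFcard : Fintype.card F = q ^ finrank K F := by
    rw [← hq]; exact card_eq_pow_finrank
  have he1 : 1 ≤ finrank K F := finrank_pos
  have hlt : finrank K F < m := by
    have hne : (Subalgebra.toSubmodule F.toSubalgebra) ≠ ⊤ := by
      intro hT
      exact hx ((hmem x).mp (by rw [← F.mem_toSubalgebra, ← Subalgebra.mem_toSubmodule, hT]; trivial))
    have hlt' := Submodule.finrank_lt (K := K) (V := L) hne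
    rwa [Subalgebra.finrank_toSubmodule, IntermediateField.finrank_eq_finrank_subalgebra, hm]
      at hlt'
  have hvF : (v : L) ∈ F := hfix
  set w : F := ⟨(v : L), hvF⟩ with hw
  have hwne : w ≠ 0 := by
    intro h0
    apply Units.ne_zero v
    exact congrArg Subtype.val h0
  have hpow := FiniteField.pow_card_sub_one_eq_one w hwne
  have hpowL : (v : L) ^ (q ^ finrank K F - 1) = 1 := by
    rw [hFcard] at hpow
    have := congrArg (Subtype.val : F → L) hpow
    push_cast at this
    simpa using this
  have hunit : v ^ (q ^ finrank K F - 1) = 1 := by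
    ext
    rw [Units.val_pow_eq_pow_val, hpowL, Units.val_one]
  have : r ∣ q ^ finrank K F - 1 := hv ▸ orderOf_dvd_of_pow_eq_one hunit
  exact hppd _ he1 hlt this

end AuxField

/-- The natural action of the Galois group `Gal(L/K)` on the unit group `Lˣ`. -/
def galUnitsHom (K L : Type*) [Field K] [Field L] [Algebra K L] :
    (L ≃ₐ[K] L) →* MulAut Lˣ where
  toFun σ := Units.mapEquiv σ.toRingEquiv.toMulEquiv
  map_one' := by ext u; rfl
  map_mul' σ τ := by ext u; rfl

/-- Lemma 6.2, main case: if `L/K` is a degree-`m ≥ 2` extension of finite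
fields with `|K| = q`, `q^m - 1` has a primitive prime divisor, and `A` is a
nilpotent subgroup of `ΓL₁(qᵐ) = Lˣ ⋊ Gal(L/K)` transitive on `L \ {0}`, then
`A = Lˣ`; in particular `A` is cyclic of order `qᵐ - 1`. -/
theorem nilpotent_transitive_eq_units {K L : Type*} [Field K] [Field L]
    [Algebra K L] [Fintype K] [Fintype L] (q m r : ℕ)
    (hq : Fintype.card K = q) (hm : Module.finrank K L = m) (hm2 : 2 ≤ m)
    (hr : r.Prime) (hrdvd : r ∣ q ^ m - 1)
    (hppd : ∀ i : ℕ, 1 ≤ i → i < m → ¬ r ∣ q ^ i - 1)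
    (A : Subgroup (Lˣ ⋊[galUnitsHom K L] (L ≃ₐ[K] L)))
    (hnilp : Group.IsNilpotent ↥A)
    (htrans : ∀ x y : L, x ≠ 0 → y ≠ 0 →
      ∃ g ∈ A, (g.left : L) * g.right x = y) :
    A = (SemidirectProduct.inl :
          Lˣ →* Lˣ ⋊[galUnitsHom K L] (L ≃ₐ[K] L)).range ∧
    IsCyclic ↥A ∧ Nat.card ↥A = q ^ m - 1 := by
  classical
  set Γ := Lˣ ⋊[galUnitsHom K L] (L ≃ₐ[K] L) with hΓ
  haveI : Finite (L ≃ₐ[K] L) :=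
    Finite.of_injective (fun σ => (σ : L → L)) (fun a b h => by
      apply AlgEquiv.ext; intro x; exact congrFun h x)
  haveI : Finite Γ :=
    Finite.of_injective (fun g => (g.left, g.right)) (fun a b h => by
      rw [Prod.mk.injEq] at h
      exact SemidirectProduct.ext h.1 h.2)
  haveI : Fintype ↥A := Fintype.ofFinite _
  haveI : FiniteDimensional K L := Module.Finite.of_finite
  haveI : Fact r.Prime := ⟨hr⟩
  have hq2 : 2 ≤ q := hq ▸ Fintype.one_lt_card
  have hcardL : Fintype.card L = q ^ m := by rw [← hq, ← hm]; exact card_eq_pow_finrank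
  have hGal : Fintype.card (L ≃ₐ[K] L) = m := by
    rw [← Nat.card_eq_fintype_card, IsGalois.card_aut_eq_finrank, hm]
  have hmr : m < r := aux_m_lt_r hq2 (by omega) hr hrdvd hppd
  have hφ : ∀ (σ : L ≃ₐ[K] L) (u : Lˣ), ((galUnitsHom K L σ u : Lˣ) : L) = σ (u : L) :=
    fun σ u => rfl
  -- any element of `Γ` whose order is a power of `r` has trivial Galois part
  have hco_rm : Nat.Coprime r m :=
    (Nat.Prime.coprime_iff_not_dvd hr).mpr
      (fun hdvd => absurd (Nat.le_of_dvd (by omega) hdvd) (by omega))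
  -- trivial Galois part for elements of `r`-power order
  have hright_of_rpow : ∀ (w : Γ) (k : ℕ), orderOf w ∣ r ^ k → w.right = 1 := by
    intro w k hk
    have h2 : orderOf w.right ∣ r ^ k :=
      dvd_trans (orderOf_map_dvd SemidirectProduct.rightHom w) hk
    have h3 : orderOf w.right ∣ m := hGal ▸ orderOf_dvd_card
    have h4 : orderOf w.right ∣ 1 := by
      have hco : Nat.gcd (r ^ k) m = 1 := Nat.Coprime.pow_left k hco_rm
      exact hco ▸ Nat.dvd_gcd h2 h3
    exact orderOf_eq_one_iff.mp (Nat.dvd_one.mp h4)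
  have hinl_eq : ∀ w : Γ, w.right = 1 → w = SemidirectProduct.inl w.left := by
    intro w h
    exact SemidirectProduct.ext (SemidirectProduct.left_inl _).symm
      (by rw [SemidirectProduct.right_inl, h])
  letI actΓ : MulAction Γ L :=
  { smul := fun g x => (g.left : L) * g.right x
    one_smul := fun x => by
      show ((1 : Γ).left : L) * (1 : Γ).right x = x
      rw [SemidirectProduct.one_left, SemidirectProduct.one_right]
      simp
    mul_smul := fun a b x => by
      show (((a * b).left : L)) * (a * b).right x =
        (a.left : L) * ((b.left : L) * b.right x |> a.right)
      rw [SemidirectProduct.mul_left, SemidirectProduct.mul_right]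
      rw [Units.val_mul, hφ, map_mul, AlgEquiv.mul_apply]
      ring }
  have hsmul_def : ∀ (g : ↥A) (x : L), g • x = ((g : Γ).left : L) * (g : Γ).right x :=
    fun g x => rfl
  have horb : MulAction.orbit (↥A) (1 : L) = {y : L | y ≠ 0} := by
    ext y
    rw [MulAction.mem_orbit_iff]
    constructor
    · rintro ⟨g, rfl⟩
      rw [hsmul_def]
      show ((g : Γ).left : L) * (g : Γ).right 1 ≠ 0
      rw [map_one, mul_one]
      exact Units.ne_zero _
    · intro hy
      obtain ⟨g, hg, hgy⟩ := htrans 1 y one_ne_zero hy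
      refine ⟨⟨g, hg⟩, ?_⟩
      rw [hsmul_def]
      exact hgy
  have hcard_orb : Nat.card (MulAction.orbit (↥A) (1 : L)) = q ^ m - 1 := by
    rw [horb]
    have e1 : Nat.card {y : L | y ≠ 0} = Nat.card Lˣ :=
      Nat.card_congr (Equiv.symm unitsEquivNeZero)
    rw [e1, Nat.card_units, Nat.card_eq_fintype_card, hcardL]
  have hdvdA : q ^ m - 1 ∣ Nat.card ↥A := by
    haveI : Fintype (MulAction.orbit (↥A) (1 : L)) := Fintype.ofFinite _
    haveI : Fintype (MulAction.stabilizer (↥A) (1 : L)) := Fintype.ofFinite _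
    have h5 := MulAction.card_orbit_mul_card_stabilizer_eq_card_group (↥A) (1 : L)
    rw [Nat.card_eq_fintype_card, ← h5, ← Nat.card_eq_fintype_card, hcard_orb]
    exact dvd_mul_right _ _
  have hrA : r ∣ Fintype.card ↥A := by
    rw [← Nat.card_eq_fintype_card]
    exact hrdvd.trans hdvdA
  obtain ⟨g, hg⟩ := exists_prime_orderOf_dvd_card r hrA
  have hgord : orderOf ((g : Γ)) = r := by
    rw [show ((g : Γ)) = A.subtype g from rfl,
      orderOf_injective A.subtype A.subtype_injective, hg]
  have hgright : (g : Γ).right = 1 := hright_of_rpow _ 1 (by rw [hgord, pow_one])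
  set v : Lˣ := (g : Γ).left with hv
  have hginl : (g : Γ) = SemidirectProduct.inl v := hinl_eq _ hgright
  have hvord : orderOf v = r := by
    rw [← hgord, hginl]
    exact (orderOf_injective SemidirectProduct.inl SemidirectProduct.inl_injective v).symm
  -- every element of `A` has trivial Galois part
  have hkey : ∀ w : ↥A, ((w : Γ)).right = 1 := by
    intro w
    set n := orderOf w with hn
    have hn0 : n ≠ 0 := (orderOf_pos w).ne'
    set s := n.factorization r with hs
    have hab : r ^ s * (n / r ^ s) = n := Nat.ordProj_mul_ordCompl_eq_self n r
    set b := n / r ^ s with hbdef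
    have hco : Nat.Coprime r b := Nat.coprime_ordCompl hr hn0
    set α := Nat.gcdA (r ^ s) b with hα
    set β := Nat.gcdB (r ^ s) b with hβ
    have hbez : (1 : ℤ) = ((r ^ s : ℕ) : ℤ) * α + ((b : ℕ) : ℤ) * β := by
      have h6 := Nat.gcd_eq_gcd_ab (r ^ s) b
      rw [Nat.Coprime.gcd_eq_one (Nat.Coprime.pow_left s hco)] at h6
      exact_mod_cast h6
    set c := w ^ (((r ^ s : ℕ) : ℤ) * α) with hc
    set d := w ^ (((b : ℕ) : ℤ) * β) with hd
    have hcd : c * d = w := by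
      rw [hc, hd, ← zpow_add, ← hbez, zpow_one]
    have hcord : c ^ b = 1 := by
      rw [hc, ← zpow_natCast, ← zpow_mul]
      have e : ((r ^ s : ℕ) : ℤ) * α * ((b : ℕ) : ℤ) = (n : ℤ) * α := by
        rw [← hab]; push_cast; ring
      rw [e, zpow_mul, zpow_natCast, hn, pow_orderOf_eq_one, one_zpow]
    have hdord : d ^ (r ^ s) = 1 := by
      rw [hd, ← zpow_natCast, ← zpow_mul]
      have e : ((b : ℕ) : ℤ) * β * ((r ^ s : ℕ) : ℤ) = (n : ℤ) * β := by
        rw [← hab]; push_cast; ring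
      rw [e, zpow_mul, zpow_natCast, hn, pow_orderOf_eq_one, one_zpow]
    have hdright : ((d : Γ)).right = 1 := by
      apply hright_of_rpow _ s
      have h7 : orderOf d ∣ r ^ s := orderOf_dvd_of_pow_eq_one hdord
      rwa [show ((d : Γ)) = A.subtype d from rfl,
        orderOf_injective A.subtype A.subtype_injective]
    have hccomm : Commute c g := commute_of_coprime_orderOf c g (by
      rw [hg]
      exact Nat.Coprime.coprime_dvd_left (orderOf_dvd_of_pow_eq_one hcord) hco.symm)
    have hfix : ((c : Γ)).right ((v : Lˣ) : L) = ((v : Lˣ) : L) := by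
      have hcommΓ : (c : Γ) * (g : Γ) = (g : Γ) * (c : Γ) :=
        congrArg Subtype.val hccomm.eq
      rw [hginl] at hcommΓ
      have hl := congrArg SemidirectProduct.left hcommΓ
      rw [SemidirectProduct.mul_left, SemidirectProduct.mul_left,
        SemidirectProduct.left_inl, SemidirectProduct.right_inl, map_one] at hl
      simp only [MulAut.one_apply] at hl
      have hunit : (galUnitsHom K L (c : Γ).right) v = v := by
        rw [mul_comm (v : Lˣ) _] at hl
        exact mul_left_cancel hl
      calc ((c : Γ)).right ((v : Lˣ) : L)
          = ((galUnitsHom K L (c : Γ).right) v : L) := (hφ _ _).symm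
        _ = ((v : Lˣ) : L) := by rw [hunit]
    have hcright : ((c : Γ)).right = 1 := aux_fix_eq_one hq hm hppd _ v hvord hr hfix
    rw [← hcd]
    have hcoe : ((c * d : ↥A) : Γ) = (c : Γ) * (d : Γ) := rfl
    rw [hcoe, SemidirectProduct.mul_right, hcright, hdright, mul_one]
  -- conclude
  have hA_eq : A = (SemidirectProduct.inl : Lˣ →* Γ).range := by
    apply le_antisymm
    · intro w hw
      have h1 : w.right = 1 := hkey ⟨w, hw⟩
      exact ⟨w.left, (hinl_eq w h1).symm⟩
    · rintro w ⟨u, rfl⟩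
      obtain ⟨g', hg', hgy⟩ := htrans 1 (u : L) one_ne_zero (Units.ne_zero u)
      rw [map_one, mul_one] at hgy
      have hul : g'.left = u := Units.ext hgy
      have h1 : g'.right = 1 := hkey ⟨g', hg'⟩
      have h2 : SemidirectProduct.inl u = g' := by
        rw [← hul]; exact (hinl_eq g' h1).symm
      rw [h2]; exact hg'
  refine ⟨hA_eq, ?_, ?_⟩
  · rw [hA_eq]
    exact isCyclic_of_surjective
      (MonoidHom.rangeRestrict (SemidirectProduct.inl : Lˣ →* Γ))
      (MonoidHom.rangeRestrict_surjective _)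
  · rw [hA_eq]
    have e := Nat.card_congr
      (MonoidHom.ofInjective
        (SemidirectProduct.inl_injective (φ := galUnitsHom K L))).toEquiv
    rw [← e, Nat.card_units, Nat.card_eq_fintype_card, hcardL]
end

section
/- Let q be a Mersenne prime (a prime such that q + 1 is a power of 2), and let K ⊆ L be finite fields with |K| = q and [L : K] = 2. Then the semidirect product Lˣ ⋊ Gal(L/K), where the Galois group acts naturally on the unit group Lˣ, is a nilpotent group. -/
/-- If `q` is a Mersenne prime and `L/K` is a degree-2 extension of finite
fields with `|K| = q`, then `ΓL₁(q²) = Lˣ ⋊ Gal(L/K)` is nilpotent. -/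
theorem gammaL1_nilpotent_of_mersenne {K L : Type*} [Field K] [Field L]
    [Algebra K L] [Fintype K] [Fintype L] (q : ℕ)
    (hq : Fintype.card K = q) (hprime : q.Prime) (hmersenne : ∃ k : ℕ, q + 1 = 2 ^ k)
    (hdeg : Module.finrank K L = 2) :
    Group.IsNilpotent (Lˣ ⋊[galUnitsHom K L] (L ≃ₐ[K] L)) := by
  obtain ⟨k, hk⟩ := hmersenne
  set G := Lˣ ⋊[galUnitsHom K L] (L ≃ₐ[K] L) with hG
  -- an equivalence with the product type
  let e : G ≃ Lˣ × (L ≃ₐ[K] L) :=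
    { toFun := fun x => (x.left, x.right)
      invFun := fun p => ⟨p.1, p.2⟩
      left_inv := fun x => rfl
      right_inv := fun p => rfl }
  have hfin : Finite G := Finite.of_equiv _ e.symm
  have hcardL : Fintype.card L = q ^ 2 := by
    rw [Module.card_eq_pow_finrank (K := K) (V := L), hq, hdeg]
  have hcardGal : Nat.card (L ≃ₐ[K] L) = 2 := by
    rw [IsGalois.card_aut_eq_finrank, hdeg]
  have hcardG : Nat.card G = (q ^ 2 - 1) * 2 := by
    rw [Nat.card_congr e, Nat.card_prod, hcardGal, Nat.card_units,
      Nat.card_eq_fintype_card, hcardL]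
  -- the embedded copy of Kˣ is central
  let ι : Kˣ →* G := SemidirectProduct.inl.comp (Units.map (algebraMap K L : K →* L))
  have hι : Function.Injective ι :=
    SemidirectProduct.inl_injective.comp
      (Units.map_injective (algebraMap K L).injective)
  have hle : ι.range ≤ Subgroup.center G := by
    rintro _ ⟨x, rfl⟩
    rw [Subgroup.mem_center_iff]
    intro g
    have hfix : (galUnitsHom K L) g.right (Units.map (algebraMap K L : K →* L) x)
        = Units.map (algebraMap K L : K →* L) x := by
      ext
      exact g.right.commutes x
    refine SemidirectProduct.ext ?_ ?_
    · show g.left * (galUnitsHom K L) g.right (Units.map (algebraMap K L : K →* L) x)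
        = Units.map (algebraMap K L : K →* L) x * (galUnitsHom K L) 1 g.left
      rw [hfix, map_one]
      exact mul_comm _ _
    · show g.right * 1 = 1 * g.right
      rw [mul_one, one_mul]
  have hdvd : (q - 1) ∣ Nat.card (Subgroup.center G) := by
    have h1 : Nat.card ι.range = q - 1 := by
      rw [Nat.card_congr (MonoidHom.ofInjective hι).toEquiv.symm, Nat.card_units,
        Nat.card_eq_fintype_card, hq]
    exact h1 ▸ Subgroup.card_dvd_of_le hle
  obtain ⟨s, hs⟩ := hdvd
  have hlag : Nat.card G =
      Nat.card (G ⧸ Subgroup.center G) * Nat.card (Subgroup.center G) :=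
    Subgroup.card_eq_card_quotient_mul_card_subgroup _
  set m := Nat.card (G ⧸ Subgroup.center G) with hm
  have hq1 : 1 ≤ q := hprime.one_lt.le
  have hfactor : q ^ 2 - 1 = (q + 1) * (q - 1) := by
    have := Nat.sq_sub_sq q 1
    simpa using this
  have harith : m * s = 2 ^ (k + 1) := by
    have h2 : m * ((q - 1) * s) = (q + 1) * (q - 1) * 2 := by
      rw [← hs, ← hlag, hcardG, hfactor]
    have h3 : (q - 1) * (m * s) = (q - 1) * ((q + 1) * 2) := by
      calc (q - 1) * (m * s) = m * ((q - 1) * s) := by ring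
        _ = (q + 1) * (q - 1) * 2 := h2
        _ = (q - 1) * ((q + 1) * 2) := by ring
    have h4 : m * s = (q + 1) * 2 := Nat.eq_of_mul_eq_mul_left (by have := hprime.two_le; omega) h3
    rw [h4, hk, pow_succ]
  have hmdvd : m ∣ 2 ^ (k + 1) := ⟨s, harith.symm⟩
  obtain ⟨j, _, hj⟩ := (Nat.dvd_prime_pow Nat.prime_two).mp hmdvd
  have hp : IsPGroup 2 (G ⧸ Subgroup.center G) := IsPGroup.of_card hj
  have : Group.IsNilpotent (G ⧸ Subgroup.center G) := hp.isNilpotent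
  exact of_quotient_center_nilpotent this
end

section
/- Let q be a Mersenne prime (a prime such that q + 1 is a power of 2), and let K ⊆ L be finite fields with |K| = q and [L : K] = 2. Let G = Lˣ ⋊ Gal(L/K), acting on L by (a, σ)·x = a·σ(x). Then there exists a nilpotent subgroup A of G which is not contained in the image of Lˣ (the canonical copy of Lˣ in G) and which acts simply transitively on L \ {0}: for all nonzero x, y ∈ L there exists a unique (a, σ) ∈ A with a·σ(x) = y. Moreover A has order q² − 1. -/
open SemidirectProduct

private lemma two_group_aux {Γ : Type*} [Group Γ] (h : Nat.card Γ = 2) :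
    (∀ a : Γ, a * a = 1) ∧ (∀ a b : Γ, a ≠ 1 → b ≠ 1 → a = b) := by
  have hsq : ∀ a : Γ, a * a = 1 := by
    intro a
    have := pow_card_eq_one' (x := a)
    rwa [h, pow_two] at this
  refine ⟨hsq, ?_⟩
  intro a b ha hb
  obtain ⟨y, hy1, hy2⟩ := (Nat.card_eq_two_iff' (1 : Γ)).mp h
  rw [hy2 a ha, hy2 b hb]

private lemma two_group_mul_eq_one {Γ : Type*} [Group Γ] (h : Nat.card Γ = 2)
    (a b : Γ) : a * b = 1 ↔ (a = 1 ↔ b = 1) := by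
  obtain ⟨hsq, huniq⟩ := two_group_aux h
  constructor
  · intro hab
    have hb : a = b⁻¹ := mul_eq_one_iff_eq_inv.mp hab
    have hbb : b⁻¹ = b := inv_eq_of_mul_eq_one_right (hsq b)
    rw [hb, hbb]
  · intro hiff
    rcases eq_or_ne a 1 with rfl | ha
    · rw [hiff.mp rfl, one_mul]
    · have hb : b ≠ 1 := fun hb1 => ha (hiff.mpr hb1)
      rw [huniq a b ha hb]
      exact hsq b

section FieldAux

variable {K L : Type*} [Field K] [Field L] [Algebra K L] [Fintype K] [Fintype L]

private lemma fixed_mem_range {x : L} (hx : ∀ σ : L ≃ₐ[K] L, σ x = x) :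
    ∃ c : K, algebraMap K L c = x := by
  haveI : FiniteDimensional K L := Module.finite_iff_finite.mpr inferInstance
  have h1 : x ∈ IntermediateField.fixedField (⊤ : Subgroup (L ≃ₐ[K] L)) :=
    fun g => hx g
  rw [← IntermediateField.fixingSubgroup_bot (F := K) (E := L),
    IsGalois.fixedField_fixingSubgroup (⊥ : IntermediateField K L)] at h1
  exact IntermediateField.mem_bot.mp h1

private lemma pow_card_mem_range {q : ℕ} (hq : Fintype.card K = q) {x : L}
    (hx : x ^ q = x) : ∃ c : K, algebraMap K L c = x := by
  classical
  have hq1 : 1 < q := hq ▸ Fintype.one_lt_card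
  set p : Polynomial L := Polynomial.X ^ q - Polynomial.X with hp
  have hmon : p.Monic := by
    apply Polynomial.monic_X_pow_sub (R := L) (p := Polynomial.X) (n := q)
    rw [Polynomial.degree_X]
    exact_mod_cast hq1
  have hp0 : p ≠ 0 := hmon.ne_zero
  have hdeg : p.natDegree ≤ q := by
    refine le_trans (Polynomial.natDegree_sub_le _ _) ?_
    simp only [Polynomial.natDegree_X_pow, Polynomial.natDegree_X]
    omega
  have hroot : ∀ z : L, z ^ q = z → z ∈ p.roots.toFinset := by
    intro z hz
    rw [Multiset.mem_toFinset, Polynomial.mem_roots hp0]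
    simp [hp, Polynomial.IsRoot, hz]
  set s : Finset L := Finset.univ.image (algebraMap K L) with hs
  have hsub : s ⊆ p.roots.toFinset := by
    intro z hz
    rw [hs, Finset.mem_image] at hz
    obtain ⟨c, -, rfl⟩ := hz
    apply hroot
    rw [← map_pow]
    congr 1
    rw [← hq]
    exact FiniteField.pow_card c
  have hcards : s.card = q := by
    rw [hs, Finset.card_image_of_injective _ (algebraMap K L).injective,
      Finset.card_univ, hq]
  have hcardr : p.roots.toFinset.card ≤ q :=
    le_trans (le_trans (Multiset.toFinset_card_le _) (Polynomial.card_roots' p)) hdeg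
  have heq : s = p.roots.toFinset :=
    Finset.eq_of_subset_of_card_le hsub (by omega)
  have hxmem : x ∈ s := heq ▸ hroot x hx
  rw [hs, Finset.mem_image] at hxmem
  obtain ⟨c, -, hc⟩ := hxmem
  exact ⟨c, hc⟩

end FieldAux

/-- If `q` is a Mersenne prime and `L/K` is a degree-2 extension of finite
fields with `|K| = q`, then `ΓL₁(q²) = Lˣ ⋊ Gal(L/K)` has a nilpotent subgroup
`A` of order `q² - 1`, not contained in the canonical copy of `Lˣ`, which acts
simply transitively on `L \ {0}`. -/
theorem exists_nilpotent_regular_subgroup_of_mersenne {K L : Type*} [Field K]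
    [Field L] [Algebra K L] [Fintype K] [Fintype L] (q : ℕ)
    (hq : Fintype.card K = q) (hprime : q.Prime)
    (hmersenne : ∃ k : ℕ, q + 1 = 2 ^ k)
    (hdeg : Module.finrank K L = 2) :
    ∃ A : Subgroup (Lˣ ⋊[galUnitsHom K L] (L ≃ₐ[K] L)),
      Group.IsNilpotent ↥A ∧
      ¬ A ≤ (SemidirectProduct.inl :
              Lˣ →* Lˣ ⋊[galUnitsHom K L] (L ≃ₐ[K] L)).range ∧
      (∀ x y : L, x ≠ 0 → y ≠ 0 →
        ∃! g : ↥A, ((g : Lˣ ⋊[galUnitsHom K L] (L ≃ₐ[K] L)).left : L) *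
            (g : Lˣ ⋊[galUnitsHom K L] (L ≃ₐ[K] L)).right x = y) ∧
      Nat.card ↥A = q ^ 2 - 1 := by
  classical
  obtain ⟨k, hk⟩ := hmersenne
  haveI : FiniteDimensional K L := Module.finite_iff_finite.mpr inferInstance
  have hq1 : 1 < q := hq ▸ Fintype.one_lt_card
  have hk1 : 1 ≤ k := by
    rcases Nat.eq_zero_or_pos k with h | h
    · subst h; omega
    · exact h
  have hqodd : q % 2 = 1 := by
    have : 2 ∣ 2 ^ k := dvd_pow_self 2 (by omega)
    omega
  have hq3 : 3 ≤ q := by omega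
  have hk2 : 2 ≤ k := by
    by_contra h
    interval_cases k <;> omega
  have h4 : 4 ∣ q + 1 := by
    have h22 : (2:ℕ) ^ 2 ∣ 2 ^ k := pow_dvd_pow 2 hk2
    rw [← hk] at h22
    simpa using h22
  -- decompose q = 2*t+1 for arithmetic
  obtain ⟨t, ht⟩ : ∃ t, q = 2 * t + 1 := ⟨q / 2, by omega⟩
  have hsq_expand : q ^ 2 = 4 * (t * t) + 4 * t + 1 := by rw [ht]; ring
  have hodd2 : q ^ 2 % 2 = 1 := by omega
  -- cardinalities
  have hcardL : Fintype.card L = q ^ 2 := by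
    rw [Module.card_eq_pow_finrank (K := K) (V := L), hq, hdeg]
  have hchar2 : ringChar L ≠ 2 := by
    intro h2
    have := FiniteField.even_card_of_char_two h2
    omega
  have hnunits : Fintype.card Lˣ = q ^ 2 - 1 := by
    rw [Fintype.card_units, hcardL]
  have hNunits : Nat.card Lˣ = q ^ 2 - 1 := by
    rw [Nat.card_eq_fintype_card, hnunits]
  -- Euler criterion
  have heuler : ∀ u : Lˣ, IsSquare u ↔ u ^ ((q ^ 2 - 1) / 2) = 1 := by
    intro u
    have := FiniteField.unit_isSquare_iff hchar2 u
    rwa [hcardL, (by omega : q ^ 2 / 2 = (q ^ 2 - 1) / 2)] at this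
  -- nonsquare * nonsquare = square, etc.
  have hneg1 : (-1 : Lˣ) ≠ 1 := by
    intro hcon
    apply Ring.neg_one_ne_one_of_char_ne_two hchar2 (R := L)
    calc (-1 : L) = ((-1 : Lˣ) : L) := by simp
    _ = ((1 : Lˣ) : L) := by rw [hcon]
    _ = 1 := by simp
  have hepm : ∀ u : Lˣ, u ^ ((q ^ 2 - 1) / 2) = 1 ∨ u ^ ((q ^ 2 - 1) / 2) = -1 := by
    intro u
    have h2 : u ^ ((q ^ 2 - 1) / 2) * u ^ ((q ^ 2 - 1) / 2) = 1 := by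
      rw [← pow_add, (by omega : (q ^ 2 - 1) / 2 + (q ^ 2 - 1) / 2 = q ^ 2 - 1),
        ← hNunits, pow_card_eq_one']
    have h3 : ((u ^ ((q ^ 2 - 1) / 2) : Lˣ) : L) = 1 ∨
        ((u ^ ((q ^ 2 - 1) / 2) : Lˣ) : L) = -1 := by
      apply mul_self_eq_one_iff.mp
      have := congrArg (Units.val) h2
      push_cast at this
      exact this
    rcases h3 with h3 | h3
    · left; exact Units.ext (by simpa using h3)
    · right; exact Units.ext (by simpa using h3)
  have hmul_sq : ∀ u v : Lˣ, IsSquare (u * v) ↔ (IsSquare u ↔ IsSquare v) := by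
    intro u v
    rw [heuler, heuler, heuler, mul_pow]
    rcases hepm u with h1 | h1 <;> rcases hepm v with h2 | h2 <;>
      rw [h1, h2] <;> simp [hneg1] <;> 
      first
        | (intro h; exact hneg1 (by simpa using h))
        | skip
  -- Galois group facts
  have hGal2 : Nat.card (L ≃ₐ[K] L) = 2 := by
    rw [IsGalois.card_aut_eq_finrank, hdeg]
  have hσsq : ∀ σ : L ≃ₐ[K] L, σ * σ = 1 := (two_group_aux hGal2).1
  have hσeq : ∀ σ τ : L ≃ₐ[K] L, σ ≠ 1 → τ ≠ 1 → σ = τ := (two_group_aux hGal2).2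
  have hσsq' : ∀ (σ : L ≃ₐ[K] L) (x : L), σ (σ x) = x := by
    intro σ x
    have := congrArg (fun f : L ≃ₐ[K] L => f x) (hσsq σ)
    simpa using this
  obtain ⟨σ₀, hσ₀⟩ : ∃ σ : L ≃ₐ[K] L, σ ≠ 1 := by
    apply Fintype.exists_ne_of_one_lt_card ?_ 1
    rw [← Nat.card_eq_fintype_card, hGal2]
    omega
  -- coercion lemma
  have hcoe : ∀ (σ : L ≃ₐ[K] L) (u : Lˣ),
      ((galUnitsHom K L σ u : Lˣ) : L) = σ (u : L) := fun σ u => rfl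
  -- squares invariant under automorphisms
  have hsqmap : ∀ (σ : L ≃ₐ[K] L) (u : Lˣ),
      IsSquare (galUnitsHom K L σ u) ↔ IsSquare u := by
    intro σ u
    constructor
    · rintro ⟨v, hv⟩
      refine ⟨(galUnitsHom K L σ).symm v, ?_⟩
      have := congrArg (galUnitsHom K L σ).symm hv
      simpa [map_mul] using this
    · rintro ⟨v, hv⟩
      exact ⟨galUnitsHom K L σ v, by rw [hv, map_mul]⟩
  -- the key fact: u⁻¹ * σ(u) is always a square
  have hSfix : ∀ (σ : L ≃ₐ[K] L) (u : Lˣ), IsSquare (u⁻¹ * galUnitsHom K L σ u) := by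
    intro σ u
    rcases eq_or_ne σ 1 with rfl | hσ
    · simp only [map_one, MulAut.one_apply, inv_mul_cancel]
      exact IsSquare.one
    · set w : Lˣ := u * galUnitsHom K L σ u with hw
      have hwfix : ∀ τ : L ≃ₐ[K] L, τ (w : L) = (w : L) := by
        intro τ
        rcases eq_or_ne τ 1 with rfl | hτ
        · simp
        · rw [hσeq τ σ hτ hσ]
          have hcw : (w : L) = (u : L) * σ (u : L) := by
            rw [hw, Units.val_mul, hcoe]
          rw [hcw, map_mul, hσsq' σ, mul_comm]
      obtain ⟨c, hc⟩ := fixed_mem_range hwfix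
      have hc0 : c ≠ 0 := by
        rintro rfl
        rw [map_zero] at hc
        exact (Units.ne_zero w) hc.symm
      have hw1 : w ^ (q - 1) = 1 := by
        apply Units.ext
        push_cast
        rw [← hc, ← map_pow, ← hq, FiniteField.pow_card_sub_one_eq_one c hc0, map_one]
      have hw2 : w ^ ((q ^ 2 - 1) / 2) = 1 := by
        have e1 : q - 1 = 2 * t := by omega
        have e2 : 2 * t * (t + 1) = 2 * (t * t) + 2 * t := by ring
        have hdvd : (q ^ 2 - 1) / 2 = (q - 1) * (t + 1) := by rw [e1, e2]; omega
        rw [hdvd, pow_mul, hw1, one_pow]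
      have hwsq : IsSquare w := (heuler w).mpr hw2
      have hrw : u⁻¹ * galUnitsHom K L σ u = (u⁻¹ * u⁻¹) * w := by
        rw [hw]; group
      rw [hrw]
      exact (IsSquare.mul_self u⁻¹).mul hwsq
  -- the subgroup A
  let A : Subgroup (Lˣ ⋊[galUnitsHom K L] (L ≃ₐ[K] L)) :=
    { carrier := {g | IsSquare g.left ↔ g.right = 1}
      one_mem' := by simp
      mul_mem' := by
        rintro g h hg hh
        simp only [Set.mem_setOf_eq, mul_left, mul_right] at *
        rw [hmul_sq, hsqmap, hg, hh, ← two_group_mul_eq_one hGal2]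
      inv_mem' := by
        rintro g hg
        simp only [Set.mem_setOf_eq, inv_left, inv_right] at *
        have : (galUnitsHom K L g.right)⁻¹ = galUnitsHom K L g.right⁻¹ := by
          rw [map_inv]
        rw [← this] at *
        constructor
        · intro hsq
          apply hg.mp ?_ |> fun h1 => by rw [h1, inv_one]
          have := hsq.map (galUnitsHom K L g.right).toMonoidHom
          simpa [isSquare_inv] using this
        · intro h1
          rw [inv_eq_one] at h1
          have := (hg.mpr h1).inv
          have h2 : IsSquare ((galUnitsHom K L g.right)⁻¹ g.left⁻¹) := by
            rcases this with ⟨r, hr⟩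
            exact ⟨(galUnitsHom K L g.right)⁻¹ r, by rw [hr, map_mul]⟩
          exact h2 }
  have hA : ∀ g : Lˣ ⋊[galUnitsHom K L] (L ≃ₐ[K] L),
      g ∈ A ↔ (IsSquare g.left ↔ g.right = 1) := fun g => Iff.rfl
  -- action compatibility
  have hact_mul : ∀ (g h : Lˣ ⋊[galUnitsHom K L] (L ≃ₐ[K] L)) (x : L),
      (((g * h).left : Lˣ) : L) * (g * h).right x
        = (g.left : L) * g.right ((h.left : L) * h.right x) := by
    intro g h x
    rw [mul_left, mul_right, Units.val_mul, hcoe, map_mul g.right, AlgEquiv.mul_apply]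
    ring
  have hact_one : ∀ x : L, (((1 : Lˣ ⋊[galUnitsHom K L] (L ≃ₐ[K] L)).left : Lˣ) : L)
      * (1 : Lˣ ⋊[galUnitsHom K L] (L ≃ₐ[K] L)).right x = x := by
    intro x; simp
  -- freeness
  have hfree : ∀ g ∈ A, ∀ x : L, x ≠ 0 → (g.left : L) * g.right x = x → g = 1 := by
    intro g hg x hx hgx
    rcases eq_or_ne g.right 1 with h1 | h1
    · have hx1 : g.right x = x := by rw [h1]; rfl
      rw [hx1] at hgx
      have hl : g.left = 1 := by
        field_simp at hgx
        exact Units.val_eq_one.mp hgx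
      refine SemidirectProduct.ext (by simpa using hl) (by simpa using h1)
    · exfalso
      have hns : ¬ IsSquare g.left := fun hsq => h1 ((hA g).mp hg |>.mp hsq)
      apply hns
      set u : Lˣ := Units.mk0 x hx with hu
      have hgu : g.left * galUnitsHom K L g.right u = u := by
        apply Units.ext
        rw [Units.val_mul, hcoe]
        exact hgx
      have hrw : g.left = (u⁻¹ * galUnitsHom K L g.right u)⁻¹ := by
        rw [mul_inv, inv_inv]
        exact eq_mul_inv_of_mul_eq hgu
      rw [hrw, isSquare_inv]
      exact hSfix g.right u
  -- transitivity
  have htrans : ∀ x y : L, x ≠ 0 → y ≠ 0 →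
      ∃ g ∈ A, (g.left : L) * g.right x = y := by
    intro x y hx hy
    set ux : Lˣ := Units.mk0 x hx with hux
    set uy : Lˣ := Units.mk0 y hy with huy
    by_cases hcase : IsSquare (uy * ux⁻¹)
    · refine ⟨⟨uy * ux⁻¹, 1⟩, ?_, ?_⟩
      · exact (hA _).mpr (iff_of_true hcase rfl)
      · show ((uy * ux⁻¹ : Lˣ) : L) * (1 : L ≃ₐ[K] L) x = y
        push_cast
        rw [AlgEquiv.one_apply]
        field_simp
        rw [hux, huy]
        simp [mul_comm]
    · refine ⟨⟨uy * (galUnitsHom K L σ₀ ux)⁻¹, σ₀⟩, ?_, ?_⟩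
      · refine (hA _).mpr (iff_of_false ?_ hσ₀)
        intro hsq
        apply hcase
        have h2 : IsSquare (galUnitsHom K L σ₀ ux * ux⁻¹) := by
          have := hSfix σ₀ ux
          rwa [mul_comm] at this
        have h3 := hsq.mul h2
        have hrw : uy * (galUnitsHom K L σ₀ ux)⁻¹ * (galUnitsHom K L σ₀ ux * ux⁻¹)
            = uy * ux⁻¹ := by group
        rwa [hrw] at h3
      · show ((uy * (galUnitsHom K L σ₀ ux)⁻¹ : Lˣ) : L) * σ₀ x = y
        rw [Units.val_mul]
        have h5 : ((galUnitsHom K L σ₀ ux)⁻¹ : Lˣ) = (galUnitsHom K L σ₀ ux)⁻¹ := rfl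
        have h6 : ((galUnitsHom K L σ₀ ux : Lˣ) : L) = σ₀ x := hcoe σ₀ ux
        have h7 : σ₀ x ≠ 0 := by
          intro h0
          apply hx
          have := congrArg σ₀.symm h0
          simpa using this
        rw [Units.val_inv_eq_inv_val, h6]
        field_simp
        rw [huy]
        simp
  -- simple transitivity (existence and uniqueness)
  have hsimply : ∀ x y : L, x ≠ 0 → y ≠ 0 →
      ∃! g : ↥A, ((g : Lˣ ⋊[galUnitsHom K L] (L ≃ₐ[K] L)).left : L) *
          (g : Lˣ ⋊[galUnitsHom K L] (L ≃ₐ[K] L)).right x = y := by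
    intro x y hx hy
    obtain ⟨g, hgA, hgxy⟩ := htrans x y hx hy
    refine ⟨⟨g, hgA⟩, hgxy, ?_⟩
    rintro ⟨h, hhA⟩ hh
    have hfix : ((h⁻¹ * g).left : L) * (h⁻¹ * g).right x = x := by
      rw [hact_mul, hgxy, ← hh, ← hact_mul, inv_mul_cancel]
      exact hact_one x
    have h1 : h⁻¹ * g = 1 := hfree _ (mul_mem (inv_mem hhA) hgA) x hx hfix
    have h2 : h = g := by
      have := inv_mul_eq_one.mp h1
      exact this
    exact Subtype.ext h2
  -- A is not contained in the image of Lˣ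
  obtain ⟨a0, ha0⟩ := FiniteField.exists_nonsquare (F := L) hchar2
  have ha0' : a0 ≠ 0 := by
    rintro rfl
    exact ha0 ⟨0, by ring⟩
  have hu0 : ¬ IsSquare (Units.mk0 a0 ha0') := by
    rintro ⟨v, hv⟩
    apply ha0
    refine ⟨(v : L), ?_⟩
    have := congrArg Units.val hv
    push_cast at this
    simpa using this
  have hg0 : (⟨Units.mk0 a0 ha0', σ₀⟩ : Lˣ ⋊[galUnitsHom K L] (L ≃ₐ[K] L)) ∈ A :=
    (hA _).mpr (iff_of_false hu0 hσ₀)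
  have hnotle : ¬ A ≤ (SemidirectProduct.inl :
      Lˣ →* Lˣ ⋊[galUnitsHom K L] (L ≃ₐ[K] L)).range := by
    intro hle
    obtain ⟨b, hb⟩ := hle hg0
    have := congrArg SemidirectProduct.right hb
    simp only [right_inl] at this
    exact hσ₀ this.symm
  -- cardinality
  have hbij : Function.Bijective
      (fun g : ↥A => (g : Lˣ ⋊[galUnitsHom K L] (L ≃ₐ[K] L)).left) := by
    constructor
    · rintro ⟨g, hg⟩ ⟨h, hh⟩ hleft
      simp only at hleft
      apply Subtype.ext
      refine SemidirectProduct.ext hleft ?_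
      have h1 : IsSquare g.left ↔ g.right = 1 := hg
      have h2 : IsSquare h.left ↔ h.right = 1 := hh
      rw [hleft] at h1
      rcases eq_or_ne h.right 1 with e | e
      · rw [e]
        exact h1.mp (h2.mpr e)
      · refine hσeq _ _ ?_ e
        intro e1
        exact e (h2.mp (h1.mpr e1))
    · intro a
      by_cases hsq : IsSquare a
      · exact ⟨⟨⟨a, 1⟩, (hA _).mpr (iff_of_true hsq rfl)⟩, rfl⟩
      · exact ⟨⟨⟨a, σ₀⟩, (hA _).mpr (iff_of_false hsq hσ₀)⟩, rfl⟩
  have hcardA : Nat.card ↥A = q ^ 2 - 1 := by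
    rw [Nat.card_eq_of_bijective _ hbij, hNunits]
  -- finiteness
  haveI hfinG : Finite (Lˣ ⋊[galUnitsHom K L] (L ≃ₐ[K] L)) := by
    apply Finite.of_injective
      (fun g : Lˣ ⋊[galUnitsHom K L] (L ≃ₐ[K] L) => (g.left, g.right))
    intro a b hab
    obtain ⟨h1, h2⟩ := Prod.mk.injEq .. |>.mp hab
    exact SemidirectProduct.ext h1 h2
  -- the central 2-complement
  set m : ℕ := (q - 1) / 2 with hm
  have hmodd : m % 2 = 1 := by omega
  have hfixq : ∀ v : Lˣ, v ^ (q - 1) = 1 → ∀ σ : L ≃ₐ[K] L, σ (v : L) = v := by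
    intro v hv σ
    have hv' : (v : L) ^ (q - 1) = 1 := by
      have := congrArg Units.val hv
      push_cast at this
      exact this
    have hvq : (v : L) ^ q = v := by
      calc (v : L) ^ q = (v : L) ^ (q - 1) * v := by
            rw [← pow_succ]
            congr 1
            omega
      _ = v := by rw [hv', one_mul]
    obtain ⟨c, hc⟩ := pow_card_mem_range hq hvq
    rw [← hc, AlgEquiv.commutes]
  let Z : Subgroup (Lˣ ⋊[galUnitsHom K L] (L ≃ₐ[K] L)) :=
    ((powMonoidHom m : Lˣ →* Lˣ).ker.map SemidirectProduct.inl)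
  have hZcent : Z ≤ Subgroup.center (Lˣ ⋊[galUnitsHom K L] (L ≃ₐ[K] L)) := by
    rintro z hz
    obtain ⟨a, ha, rfl⟩ := Subgroup.mem_map.mp hz
    have ham : a ^ m = 1 := ha
    have haq : a ^ (q - 1) = 1 := by
      have : a ^ (q - 1) = (a ^ m) ^ 2 := by
        rw [← pow_mul]
        congr 1
        omega
      rw [this, ham, one_pow]
    have haK : ∀ σ : L ≃ₐ[K] L, σ (a : L) = a := hfixq a haq
    rw [Subgroup.mem_center_iff]
    intro g
    refine SemidirectProduct.ext ?_ ?_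
    · simp only [mul_left, left_inl, right_inl, map_one, MulAut.one_apply]
      have h1 : galUnitsHom K L g.right a = a := Units.ext (haK g.right)
      rw [h1, mul_comm]
    · simp only [mul_right, right_inl, mul_one, one_mul]
  have hZA : Z ≤ A := by
    rintro z hz
    obtain ⟨a, ha, rfl⟩ := Subgroup.mem_map.mp hz
    have ham : a ^ m = 1 := ha
    refine (hA _).mpr ?_
    simp only [left_inl, right_inl]
    refine iff_of_true ⟨a ^ ((m + 1) / 2), ?_⟩ trivial
    rw [← pow_add, (by omega : (m + 1) / 2 + (m + 1) / 2 = m + 1), pow_succ, ham, one_mul]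
  set N : Subgroup ↥A := Z.subgroupOf A with hN
  have hNcent : N ≤ Subgroup.center ↥A := by
    intro x hx
    have hxc : (x : Lˣ ⋊[galUnitsHom K L] (L ≃ₐ[K] L)) ∈
        Subgroup.center (Lˣ ⋊[galUnitsHom K L] (L ≃ₐ[K] L)) :=
      hZcent (Subgroup.mem_subgroupOf.mp hx)
    rw [Subgroup.mem_center_iff]
    intro g
    apply Subtype.ext
    push_cast
    exact Subgroup.mem_center_iff.mp hxc (g : Lˣ ⋊[galUnitsHom K L] (L ≃ₐ[K] L))
  haveI hNnormal : N.Normal := by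
    constructor
    intro n hn g
    have hc := Subgroup.mem_center_iff.mp (hNcent hn) g
    have : g * n * g⁻¹ = n := by
      rw [hc]
      group
    rwa [this]
  -- the quotient A/N is a 2-group
  have hpq : IsPGroup 2 (↥A ⧸ N) := by
    intro gbar
    refine ⟨k + 1, ?_⟩
    induction gbar using QuotientGroup.induction_on with
    | H g =>
      rw [← QuotientGroup.mk_pow, QuotientGroup.eq_one_iff]
      rw [hN, Subgroup.mem_subgroupOf]
      have hcoe_pow : ((g ^ (2 ^ (k + 1)) : ↥A) : Lˣ ⋊[galUnitsHom K L] (L ≃ₐ[K] L))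
          = ((g : Lˣ ⋊[galUnitsHom K L] (L ≃ₐ[K] L))) ^ (2 ^ (k + 1)) := by
        push_cast
        rfl
      rw [hcoe_pow]
      set h : Lˣ ⋊[galUnitsHom K L] (L ≃ₐ[K] L) :=
        ((g : Lˣ ⋊[galUnitsHom K L] (L ≃ₐ[K] L))) ^ (2 ^ (k + 1)) with hh
      have hr : h.right = 1 := by
        have h1 : h.right = ((g : Lˣ ⋊[galUnitsHom K L] (L ≃ₐ[K] L)).right) ^ (2 ^ (k + 1)) := by
          rw [hh]
          show SemidirectProduct.rightHom
            (((g : Lˣ ⋊[galUnitsHom K L] (L ≃ₐ[K] L))) ^ (2 ^ (k + 1))) = _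
          rw [map_pow]
          rfl
        rw [h1, (by ring : 2 ^ (k + 1) = 2 * 2 ^ k), pow_mul, pow_two,
          hσsq _, one_pow]
      have hm1 : h ^ m = 1 := by
        have h1 : h ^ m = ((g : Lˣ ⋊[galUnitsHom K L] (L ≃ₐ[K] L))) ^ (2 ^ (k + 1) * m) := by
          rw [hh, ← pow_mul]
        have hcard : 2 ^ (k + 1) * m = q ^ 2 - 1 := by
          have e0 : 2 ^ (k + 1) = 2 * (q + 1) := by
            rw [pow_succ, ← hk]
            ring
          have e1 : 2 * (q + 1) * m = (q + 1) * (2 * m) := by ring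
          have e2 : (q + 1) * (q - 1) = q ^ 2 - 1 := by
            have f1 : q - 1 = 2 * t := by omega
            have f2 : (q + 1) * (2 * t) = 4 * (t * t) + 4 * t := by rw [ht]; ring
            rw [f1, f2]
            omega
          rw [e0, e1, (by omega : 2 * m = q - 1), e2]
        rw [h1, hcard]
        have hg1 : g ^ (q ^ 2 - 1) = 1 := by
          have := pow_card_eq_one' (x := g)
          rwa [hcardA] at this
        calc ((g : Lˣ ⋊[galUnitsHom K L] (L ≃ₐ[K] L))) ^ (q ^ 2 - 1)
            = ((g ^ (q ^ 2 - 1) : ↥A) : Lˣ ⋊[galUnitsHom K L] (L ≃ₐ[K] L)) := by push_cast; rfl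
        _ = 1 := by rw [hg1]; rfl
      have hinl : h = SemidirectProduct.inl h.left := by
        refine SemidirectProduct.ext ?_ ?_
        · rw [left_inl]
        · rw [right_inl, hr]
      refine Subgroup.mem_map.mpr ⟨h.left, ?_, hinl.symm⟩
      show h.left ^ m = 1
      have h2 : SemidirectProduct.inl (h.left ^ m)
          = (1 : Lˣ ⋊[galUnitsHom K L] (L ≃ₐ[K] L)) := by
        rw [map_pow, ← hinl, hm1]
      have h3 := h2.trans (map_one (SemidirectProduct.inl :
        Lˣ →* Lˣ ⋊[galUnitsHom K L] (L ≃ₐ[K] L))).symm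
      exact inl_injective h3
  -- nilpotency
  haveI : Fact (Nat.Prime 2) := ⟨Nat.prime_two⟩
  haveI hnilQ : Group.IsNilpotent (↥A ⧸ N) := hpq.isNilpotent
  have hnil : Group.IsNilpotent ↥A := by
    refine isNilpotent_of_ker_le_center (QuotientGroup.mk' N) ?_
    rw [QuotientGroup.ker_mk']
    exact hNcent
  exact ⟨A, hnil, hnotle, hsimply, hcardA⟩
end

section
/- Let K ⊆ L be finite fields of characteristic p with |K| = q = p^f and [L : K] = m ≥ 2, and suppose there exists a primitive prime divisor r of p^{fm} − 1, i.e. a prime r dividing p^{fm} − 1 such that r does not divide p^i − 1 for 1 ≤ i < fm. Let G = Lˣ ⋊ Gal(L/K) and let Z be the central subgroup of G given by the image of Kˣ (scalars) inside the canonical copy of Lˣ. Suppose A is a nilpotent subgroup of G containing Z which is transitive on the 1-dimensional K-subspaces of L, i.e. for all nonzero x, y ∈ L there exists (a, σ) ∈ A such that the K-span of a·σ(x) equals the K-span of y. Then A equals the image of Lˣ in G; in particular A/Z is cyclic of order (q^m − 1)/(q − 1). -/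
private lemma aux_center {G : Type*} [Group G] (hn : Group.IsNilpotent G)
    {P : Subgroup G} (hP : P.Normal) {x : G} (hxP : x ∈ P) (hx1 : x ≠ 1) :
    ∃ z, z ∈ P ∧ z ≠ 1 ∧ z ∈ Subgroup.center G := by
  obtain ⟨n, hn⟩ := hn.nilpotent
  have key : ∀ n, ∀ x : G, x ∈ P → x ∈ Subgroup.upperCentralSeries G n → x ≠ 1 →
      ∃ z, z ∈ P ∧ z ≠ 1 ∧ z ∈ Subgroup.center G := by
    intro n
    induction n with
    | zero =>
      intro x hxP hxu hx1
      rw [upperCentralSeries_zero, Subgroup.mem_bot] at hxu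
      exact absurd hxu hx1
    | succ n ih =>
      intro x hxP hxu hx1
      by_cases hc : x ∈ Subgroup.center G
      · exact ⟨x, hxP, hx1, hc⟩
      · rw [Subgroup.mem_center_iff] at hc
        push_neg at hc
        obtain ⟨y, hy⟩ := hc
        refine ih (x * y * x⁻¹ * y⁻¹) ?_ (mem_upperCentralSeries_succ_iff.mp hxu y) ?_
        · have h2 : x * y * x⁻¹ * y⁻¹ = x * (y * x⁻¹ * y⁻¹) := by group
          rw [h2]
          exact mul_mem hxP (hP.conj_mem _ (inv_mem hxP) y)
        · intro h
          apply hy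
          have h2 : x * y * x⁻¹ = y := by
            have := mul_eq_one_iff_eq_inv.mp h
            rw [this, inv_inv]
          calc y * x = (x * y * x⁻¹) * x := by rw [h2]
          _ = x * y := by group
  exact key n x hxP (hn ▸ Subgroup.mem_top x) hx1

private lemma aux_fix {K L : Type*} [Field K] [Field L] [Algebra K L] [Fintype K] [Fintype L]
    (p f q m r : ℕ) (hf : 0 < f) (hqf : q = p ^ f) (hq : Fintype.card K = q)
    (hm : Module.finrank K L = m)
    (hppd : ∀ i : ℕ, 1 ≤ i → i < f * m → ¬ r ∣ p ^ i - 1)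
    (u : Lˣ) (hru : r ∣ orderOf u) (σ : L ≃ₐ[K] L) (hσ : σ (u : L) = (u : L)) : σ = 1 := by
  haveI : FiniteDimensional K L := Module.Finite.of_finite
  set T : IntermediateField K L :=
    (AlgHom.equalizer (σ : L →ₐ[K] L) (AlgHom.id K L)).toIntermediateField
      (fun x hx => by
        rw [AlgHom.mem_equalizer] at hx ⊢
        simp only [AlgHom.coe_coe, AlgHom.id_apply] at hx ⊢
        rw [map_inv₀, hx]) with hT
  have hmemT : ∀ x : L, x ∈ T ↔ σ x = x := fun x => Iff.rfl
  have hum : (u : L) ∈ T := (hmemT _).mpr hσ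
  have huinv : ((u⁻¹ : Lˣ) : L) ∈ T := by
    rw [hmemT, Units.val_inv_eq_inv_val, map_inv₀, hσ]
  let v : Tˣ := ⟨⟨(u : L), hum⟩, ⟨((u⁻¹ : Lˣ) : L), huinv⟩,
    Subtype.ext (by simp), Subtype.ext (by simp)⟩
  have hψ : Function.Injective (Units.map (T.val : T →* L)) :=
    Units.map_injective (fun a b h => Subtype.ext h)
  have hov : orderOf v = orderOf u := by
    rw [← orderOf_injective _ hψ v]
    congr 1
  have hrv : r ∣ Nat.card Tˣ := dvd_trans (hov ▸ hru) (orderOf_dvd_natCard v)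
  letI : Fintype T := Fintype.ofFinite T
  have hcardT : Nat.card T = q ^ Module.finrank K T := by
    rw [Nat.card_eq_fintype_card, Module.card_eq_pow_finrank (K := K), hq]
  have hrT : r ∣ p ^ (f * Module.finrank K T) - 1 := by
    have h3 := hrv
    rw [Nat.card_units, hcardT, hqf, ← pow_mul] at h3
    exact h3
  have hd1 : 0 < Module.finrank K T := Module.finrank_pos
  have hdm : m ≤ Module.finrank K T := by
    by_contra hlt
    push_neg at hlt
    exact hppd (f * Module.finrank K T) (Nat.one_le_iff_ne_zero.mpr (by positivity))
      ((Nat.mul_lt_mul_left hf).mpr hlt) hrT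
  have hTtop : T = ⊤ := by
    refine IntermediateField.eq_of_le_of_finrank_le le_top ?_
    rw [IntermediateField.finrank_top', hm]
    exact hdm
  ext x
  have hx : x ∈ T := hTtop ▸ IntermediateField.mem_top
  simpa using (hmemT x).mp hx


/-- Lemma 6.3, main case (stated via preimages): let `L/K` be a degree-`m ≥ 2`
extension of finite fields with `|K| = q`, `p` the characteristic and `q = pᶠ`,
and suppose `p^(fm) - 1` has a primitive prime divisor. If `A` is a nilpotent
subgroup of `ΓL₁(qᵐ) = Lˣ ⋊ Gal(L/K)` containing the central subgroup `Z` of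
scalars (the image of `Kˣ`) and transitive on the 1-dimensional `K`-subspaces
of `L`, then `A` is the canonical copy of `Lˣ`. -/
theorem nilpotent_line_transitive_eq_units {K L : Type*} [Field K] [Field L]
    [Algebra K L] [Fintype K] [Fintype L] (p f q m r : ℕ)
    (hp : p.Prime) (hchar : CharP K p) (hf : 0 < f) (hqf : q = p ^ f)
    (hq : Fintype.card K = q) (hm : Module.finrank K L = m) (hm2 : 2 ≤ m)
    (hr : r.Prime) (hrdvd : r ∣ p ^ (f * m) - 1)
    (hppd : ∀ i : ℕ, 1 ≤ i → i < f * m → ¬ r ∣ p ^ i - 1)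
    (A : Subgroup (Lˣ ⋊[galUnitsHom K L] (L ≃ₐ[K] L)))
    (hZ : ((SemidirectProduct.inl :
            Lˣ →* Lˣ ⋊[galUnitsHom K L] (L ≃ₐ[K] L)).comp
          (Units.map (algebraMap K L).toMonoidHom)).range ≤ A)
    (hnilp : Group.IsNilpotent ↥A)
    (htrans : ∀ x y : L, x ≠ 0 → y ≠ 0 → ∃ g ∈ A,
      Submodule.span K {(g.left : L) * g.right x} = Submodule.span K {y}) :
    A = (SemidirectProduct.inl :
          Lˣ →* Lˣ ⋊[galUnitsHom K L] (L ≃ₐ[K] L)).range := by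
  classical
  haveI : FiniteDimensional K L := Module.Finite.of_finite
  haveI : Fact r.Prime := ⟨hr⟩
  haveI : Group.IsNilpotent ↥A := hnilp
  haveI : Finite (L ≃ₐ[K] L) := Finite.of_injective (fun σ => (σ : L → L))
    (fun a b h => by ext x; exact congrFun h x)
  haveI : Finite (Lˣ ⋊[galUnitsHom K L] (L ≃ₐ[K] L)) :=
    Finite.of_injective (fun g => (g.left, g.right))
      (fun a b h => SemidirectProduct.ext (congrArg Prod.fst h) (congrArg Prod.snd h))
  have hm0 : 0 < m := lt_of_lt_of_le two_pos hm2
  have hfm1 : 1 ≤ f * m := Nat.one_le_iff_ne_zero.mpr (by positivity)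
  -- basic arithmetic
  have hrp : ¬ r ∣ p := by
    intro h
    have h1 : r ∣ p ^ (f * m) := dvd_pow h (by omega)
    have h2 : r ∣ p ^ (f * m) - (p ^ (f * m) - 1) := Nat.dvd_sub h1 hrdvd
    have h3 : 1 ≤ p ^ (f * m) := Nat.one_le_pow _ _ hp.pos
    rw [Nat.sub_sub_self h3] at h2
    exact hr.one_lt.ne' (Nat.eq_one_of_dvd_one h2)
  have hfermat : r ∣ p ^ (r - 1) - 1 := by
    have hp0 : (p : ZMod r) ≠ 0 := by
      rw [Ne, ZMod.natCast_eq_zero_iff]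
      exact hrp
    have h1 : (p : ZMod r) ^ (r - 1) = 1 := ZMod.pow_card_sub_one_eq_one hp0
    have h2 : ((p ^ (r - 1) - 1 : ℕ) : ZMod r) = 0 := by
      have h3 : 1 ≤ p ^ (r - 1) := Nat.one_le_pow _ _ hp.pos
      push_cast [Nat.cast_sub h3]
      rw [h1]; ring
    exact (ZMod.natCast_eq_zero_iff _ _).mp h2
  have hrbig : f * m ≤ r - 1 := by
    by_contra hlt
    push_neg at hlt
    exact hppd (r - 1) (by have := hr.two_le; omega) hlt hfermat
  have hrm : ¬ r ∣ m := by
    intro h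
    have h1 : r ≤ m := Nat.le_of_dvd hm0 h
    have h2 : m ≤ f * m := Nat.le_mul_of_pos_left m hf
    omega
  -- cardinalities
  have hcardL : Fintype.card L = q ^ m := by
    rw [← hq, ← hm]
    exact Module.card_eq_pow_finrank
  have hrLx : r ∣ Nat.card Lˣ := by
    rw [Nat.card_eq_fintype_card, Fintype.card_units, hcardL, hqf, ← pow_mul]
    exact hrdvd
  set N : Subgroup Lˣ := (Units.map (algebraMap K L).toMonoidHom).range with hN
  have hUinj : Function.Injective (Units.map (algebraMap K L).toMonoidHom) :=
    Units.map_injective (algebraMap K L).injective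
  have hcardN : Nat.card N = q - 1 := by
    rw [← Nat.card_congr (MonoidHom.ofInjective hUinj).toEquiv, Nat.card_units,
      Nat.card_eq_fintype_card, hq]
  have hrN : ¬ r ∣ Nat.card N := by
    rw [hcardN, hqf]
    refine hppd f hf ?_
    calc f = f * 1 := (mul_one f).symm
    _ < f * m := by exact (Nat.mul_lt_mul_left hf).mpr (by omega)
  -- the subgroup of elements whose left part is a scalar
  have hNfix : ∀ (σ : L ≃ₐ[K] L) (u : Lˣ), u ∈ N → galUnitsHom K L σ u = u := by
    rintro σ u ⟨c, rfl⟩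
    ext
    exact σ.commutes c
  have hNmem_iff : ∀ (σ : L ≃ₐ[K] L) (u : Lˣ), galUnitsHom K L σ u ∈ N ↔ u ∈ N := by
    intro σ u
    constructor
    · intro h
      have h2 : galUnitsHom K L σ⁻¹ (galUnitsHom K L σ u) = u := by
        rw [← MulAut.mul_apply, ← map_mul, inv_mul_cancel, map_one, MulAut.one_apply]
      rw [← h2, hNfix σ⁻¹ _ h]
      exact h
    · intro h
      rw [hNfix σ u h]
      exact h
  -- span singleton lemma
  have hspan : ∀ a b : L, a ≠ 0 → b ≠ 0 → Submodule.span K {a} = Submodule.span K {b} →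
      ∃ c : Kˣ, a = algebraMap K L c * b := by
    intro a b ha hb hab
    have h1 : a ∈ Submodule.span K {b} := hab ▸ Submodule.mem_span_singleton_self a
    obtain ⟨c, hc⟩ := Submodule.mem_span_singleton.mp h1
    have hc0 : c ≠ 0 := by
      rintro rfl
      rw [zero_smul] at hc
      exact ha hc.symm
    exact ⟨Units.mk0 c hc0, by rw [← hc, Algebra.smul_def]; rfl⟩
  -- the subgroup SG of elements of the semidirect product with scalar left component
  set SG : Subgroup (Lˣ ⋊[galUnitsHom K L] (L ≃ₐ[K] L)) :=
    { carrier := {g | g.left ∈ N}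
      one_mem' := by simp only [Set.mem_setOf_eq, SemidirectProduct.one_left]; exact one_mem N
      mul_mem' := by
        intro a b ha hb
        simp only [Set.mem_setOf_eq, SemidirectProduct.mul_left]
        exact mul_mem ha ((hNmem_iff _ _).mpr hb)
      inv_mem' := by
        intro a ha
        simp only [Set.mem_setOf_eq, SemidirectProduct.inv_left]
        exact (hNmem_iff _ _).mpr (inv_mem ha) } with hSG
  have hSGmem : ∀ g : Lˣ ⋊[galUnitsHom K L] (L ≃ₐ[K] L), g ∈ SG ↔ g.left ∈ N :=
    fun g => Iff.rfl
  have hkey : ∀ g h : Lˣ ⋊[galUnitsHom K L] (L ≃ₐ[K] L),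
      g⁻¹ * h ∈ SG ↔ g.left⁻¹ * h.left ∈ N := by
    intro g h
    rw [hSGmem]
    have h1 : (g⁻¹ * h).left = galUnitsHom K L g.right⁻¹ (g.left⁻¹ * h.left) := by
      simp [SemidirectProduct.mul_left, map_mul]
    rw [h1, hNmem_iff]
  -- the map from A to the quotient Lˣ ⧸ N
  set f0 : ↥A → Lˣ ⧸ N := fun a =>
    QuotientGroup.mk ((a : Lˣ ⋊[galUnitsHom K L] (L ≃ₐ[K] L)).left) with hf0
  have hiff : ∀ a b : ↥A, f0 a = f0 b ↔ a⁻¹ * b ∈ SG.subgroupOf A := by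
    intro a b
    rw [hf0]
    simp only
    rw [QuotientGroup.eq, Subgroup.mem_subgroupOf]
    exact (hkey _ _).symm
  set φ : (↥A ⧸ SG.subgroupOf A) → Lˣ ⧸ N := fun qq =>
    Quotient.liftOn' qq f0
      (fun a b h => (hiff a b).mpr (QuotientGroup.leftRel_apply.mp h)) with hφ
  have hφmk : ∀ a : ↥A, φ (QuotientGroup.mk a) = f0 a := fun a => rfl
  have hinjφ : Function.Injective φ := by
    intro q1 q2
    refine Quotient.inductionOn₂' q1 q2 ?_
    intro a b h
    refine Quotient.sound' (QuotientGroup.leftRel_apply.mpr ?_)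
    exact (hiff a b).mp h
  have hsurjφ : Function.Surjective φ := by
    intro qq
    obtain ⟨w, rfl⟩ := QuotientGroup.mk_surjective qq
    obtain ⟨g, hgA, hsp⟩ := htrans 1 (w : L) one_ne_zero w.ne_zero
    rw [map_one, mul_one] at hsp
    obtain ⟨c, hc⟩ := hspan (w : L) ((g.left : Lˣ) : L) w.ne_zero (Units.ne_zero _) hsp.symm
    refine ⟨QuotientGroup.mk ⟨g, hgA⟩, ?_⟩
    rw [hφmk]
    rw [hf0]
    simp only
    rw [QuotientGroup.eq]
    refine ⟨(c : Kˣ), ?_⟩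
    ext
    push_cast
    rw [hc]
    field_simp
    rfl
  -- r divides the cardinality of A
  have hrA : r ∣ Nat.card ↥A := by
    have h1 : Nat.card (Lˣ ⧸ N) ∣ Nat.card ↥A := by
      rw [Nat.card_congr (Equiv.ofBijective φ ⟨hinjφ, hsurjφ⟩).symm]
      exact Subgroup.card_quotient_dvd_card _
    have h2 : Nat.card Lˣ = Nat.card (Lˣ ⧸ N) * Nat.card N :=
      Subgroup.card_eq_card_quotient_mul_card_subgroup N
    have h3 : r ∣ Nat.card (Lˣ ⧸ N) * Nat.card N := h2 ▸ hrLx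
    exact dvd_trans ((hr.dvd_mul.mp h3).resolve_right hrN) h1
  -- a normal Sylow r-subgroup of A
  let P : Sylow r ↥A := default
  have hPnorm : (P : Subgroup ↥A).Normal :=
    Sylow.normal_of_normalizerCondition normalizerCondition_of_isNilpotent P
  have hcardP : Nat.card P = r ^ (Nat.card ↥A).factorization r := P.card_eq_multiplicity
  have hfac : (Nat.card ↥A).factorization r ≠ 0 := by
    have h0 : Nat.card ↥A ≠ 0 := Nat.card_pos.ne'
    exact ((Nat.Prime.factorization_pos_of_dvd hr h0 hrA).ne')
  have hPcard1 : 1 < Nat.card P := by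
    rw [hcardP]
    exact Nat.one_lt_pow hfac hr.one_lt
  haveI : Nontrivial ↥(P : Subgroup ↥A) := Finite.one_lt_card_iff_nontrivial.mp hPcard1
  obtain ⟨y, hy1⟩ := exists_ne (1 : ↥(P : Subgroup ↥A))
  have hx1 : (y : ↥A) ≠ 1 := by
    intro h
    exact hy1 (Subtype.ext h)
  obtain ⟨z, hzP, hz1, hzc⟩ := aux_center hnilp hPnorm y.2 hx1
  -- z is an r-element
  obtain ⟨k, hk⟩ := P.isPGroup' ⟨z, hzP⟩
  have hzpow : z ^ (r ^ k) = 1 := by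
    have := congrArg (Subtype.val) hk
    push_cast at this
    exact this
  obtain ⟨j, hjk, hj⟩ := (Nat.dvd_prime_pow hr).mp (orderOf_dvd_of_pow_eq_one hzpow)
  have hj0 : j ≠ 0 := by
    rintro rfl
    rw [pow_zero, orderOf_eq_one_iff] at hj
    exact hz1 hj
  have hrz : r ∣ orderOf z := hj ▸ dvd_pow_self r hj0
  -- the image of z in the semidirect product lies in the copy of Lˣ
  set g : Lˣ ⋊[galUnitsHom K L] (L ≃ₐ[K] L) := (z : Lˣ ⋊[galUnitsHom K L] (L ≃ₐ[K] L))
    with hgdef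
  have hog : orderOf g = orderOf z := orderOf_injective A.subtype A.subtype_injective z
  have horight : orderOf g.right ∣ r ^ j := by
    have h1 : orderOf (SemidirectProduct.rightHom g) ∣ orderOf g :=
      orderOf_map_dvd SemidirectProduct.rightHom g
    rw [hog, hj] at h1
    exact h1
  have hgal : Fintype.card (L ≃ₐ[K] L) = m := by
    rw [← Nat.card_eq_fintype_card, IsGalois.card_aut_eq_finrank, hm]
  have hor1 : g.right = 1 := by
    have h1 : orderOf g.right ∣ m := hgal ▸ orderOf_dvd_card
    have hcop : Nat.Coprime (r ^ j) m := (hr.coprime_iff_not_dvd.mpr hrm).pow_left j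
    have h2 : orderOf g.right ∣ 1 := hcop ▸ Nat.dvd_gcd horight h1
    rw [orderOf_eq_one_iff.mp (Nat.eq_one_of_dvd_one h2)]
  set u : Lˣ := g.left with hu
  have hgu : g = SemidirectProduct.inl u := by
    conv_lhs => rw [← SemidirectProduct.inl_left_mul_inr_right g]
    rw [hor1, map_one, mul_one]
  have hou : orderOf u = orderOf g := by
    rw [hgu]
    exact (orderOf_injective SemidirectProduct.inl SemidirectProduct.inl_injective u).symm
  have hru : r ∣ orderOf u := by
    rw [hou, hog]
    exact hrz
  -- every element of A has trivial Galois part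
  have hright1 : ∀ a ∈ A, SemidirectProduct.right a = 1 := by
    intro a ha
    have hcomm : (⟨a, ha⟩ : ↥A) * z = z * ⟨a, ha⟩ := Subgroup.mem_center_iff.mp hzc ⟨a, ha⟩
    have hcomm2 : a * g = g * a := congrArg Subtype.val hcomm
    rw [hgu] at hcomm2
    have h1 := congrArg SemidirectProduct.left hcomm2
    simp only [SemidirectProduct.mul_left, SemidirectProduct.left_inl,
      SemidirectProduct.right_inl, map_one, MulAut.one_apply] at h1
    have h2 : galUnitsHom K L a.right u = u := by
      have h3 : a.left * galUnitsHom K L a.right u = a.left * u := by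
        rw [h1, mul_comm]
      exact mul_left_cancel h3
    have h4 : a.right ((u : Lˣ) : L) = ((u : Lˣ) : L) := congrArg Units.val h2
    exact aux_fix p f q m r hf hqf hq hm hppd u hru a.right h4
  -- conclude
  refine le_antisymm ?_ ?_
  · intro a ha
    have h1 : a = SemidirectProduct.inl a.left := by
      conv_lhs => rw [← SemidirectProduct.inl_left_mul_inr_right a]
      rw [hright1 a ha, map_one, mul_one]
    exact h1 ▸ ⟨a.left, rfl⟩
  · rintro - ⟨w, rfl⟩
    obtain ⟨g2, hg2A, hsp⟩ := htrans 1 (w : L) one_ne_zero w.ne_zero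
    rw [map_one, mul_one] at hsp
    obtain ⟨c, hc⟩ := hspan (w : L) ((g2.left : Lˣ) : L) w.ne_zero (Units.ne_zero _) hsp.symm
    have hw : w = Units.map (algebraMap K L).toMonoidHom c * g2.left := by
      ext
      push_cast
      rw [hc]
      rfl
    have hg2 : SemidirectProduct.inl g2.left = g2 := by
      conv_rhs => rw [← SemidirectProduct.inl_left_mul_inr_right g2]
      rw [hright1 g2 hg2A, map_one, mul_one]
    rw [hw, map_mul, hg2]
    exact mul_mem (hZ ⟨c, rfl⟩) hg2A
end

section
/- Let q be a Mersenne prime (a prime such that q + 1 is a power of 2), and let K ⊆ L be finite fields with |K| = q and [L : K] = 2. Let G = Lˣ ⋊ Gal(L/K) and let Z be the image of Kˣ inside the canonical copy of Lˣ in G. Then there exists a nilpotent subgroup A of G with Z ≤ A, of order q² − 1, not contained in the image of Lˣ, which is transitive on the 1-dimensional K-subspaces of L: for all nonzero x, y ∈ L there exists (a, σ) ∈ A such that the K-span of a·σ(x) equals the K-span of y. -/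
/-- Part of Lemma 6.3(ii): if `q` is a Mersenne prime and `L/K` is a degree-2
extension of finite fields with `|K| = q`, then `ΓL₁(q²) = Lˣ ⋊ Gal(L/K)` has a
nilpotent subgroup `A` of order `q² - 1` containing the scalars `Kˣ`, not
contained in the canonical copy of `Lˣ`, which is transitive on the
1-dimensional `K`-subspaces of `L`. -/
theorem exists_nilpotent_line_transitive_of_mersenne {K L : Type*} [Field K]
    [Field L] [Algebra K L] [Fintype K] [Fintype L] (q : ℕ)
    (hq : Fintype.card K = q) (hprime : q.Prime)
    (hmersenne : ∃ k : ℕ, q + 1 = 2 ^ k)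
    (hdeg : Module.finrank K L = 2) :
    ∃ A : Subgroup (Lˣ ⋊[galUnitsHom K L] (L ≃ₐ[K] L)),
      ((SemidirectProduct.inl :
          Lˣ →* Lˣ ⋊[galUnitsHom K L] (L ≃ₐ[K] L)).comp
        (Units.map (algebraMap K L).toMonoidHom)).range ≤ A ∧
      Group.IsNilpotent ↥A ∧
      Nat.card ↥A = q ^ 2 - 1 ∧
      ¬ A ≤ (SemidirectProduct.inl :
              Lˣ →* Lˣ ⋊[galUnitsHom K L] (L ≃ₐ[K] L)).range ∧
      ∀ x y : L, x ≠ 0 → y ≠ 0 → ∃ g ∈ A,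
        Submodule.span K {(g.left : L) * g.right x} = Submodule.span K {y} := by
  classical
  obtain ⟨k, hk⟩ := hmersenne
  -- q is odd, at least 3
  have hq2 : q ≠ 2 := by
    rintro rfl
    have hklt : k < 2 := by
      by_contra h
      have : 2 ^ 2 ≤ 2 ^ k := Nat.pow_le_pow_right (by norm_num) (le_of_not_gt h)
      omega
    interval_cases k <;> omega
  have hodd : Odd q := hprime.odd_of_ne_two hq2
  have hq3 : 3 ≤ q := by have := hprime.two_le; omega
  haveI : FiniteDimensional K L := FiniteDimensional.of_finrank_eq_succ hdeg
  have hcardL : Fintype.card L = q ^ 2 := by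
    rw [Module.card_eq_pow_finrank (K := K) (V := L), hq, hdeg]
  have hcardLx : Fintype.card Lˣ = q ^ 2 - 1 := by
    rw [Fintype.card_units, hcardL]
  have hoddq2 : Odd (q ^ 2) := hodd.pow
  set m : ℕ := (q ^ 2 - 1) / 2 with hm
  have hm2 : 2 * m = q ^ 2 - 1 := by
    rcases hoddq2 with ⟨t, ht⟩; omega
  -- characteristic facts
  have hfact : q ^ 2 - 1 = (q - 1) * (q + 1) := by
    obtain ⟨n, rfl⟩ : ∃ n : ℕ, q = n + 3 := ⟨q - 3, by omega⟩
    show (n + 3) ^ 2 - 1 = (n + 3 - 1) * (n + 3 + 1)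
    rw [show n + 3 - 1 = n + 2 from rfl]
    exact Nat.sub_eq_of_eq_add (by ring)
  have hchar : ringChar L ≠ 2 := by
    intro h
    have := FiniteField.even_card_iff_char_two.mp h
    rw [hcardL] at this
    rcases hoddq2 with ⟨t, ht⟩; omega
  have hneg : (-1 : L) ≠ 1 := Ring.neg_one_ne_one_of_char_ne_two hchar
  have hnegu : (-1 : Lˣ) ≠ 1 := by
    intro h; exact hneg (by simpa using congrArg Units.val h)
  -- dichotomy for m-th powers of units
  have hpow2 : ∀ u : Lˣ, u ^ m = 1 ∨ u ^ m = -1 := by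
    intro u
    have h1 : u ^ (2 * m) = 1 := by
      rw [hm2, ← hcardLx]; exact pow_card_eq_one
    have h2 : ((u : L) ^ m) * ((u : L) ^ m) = 1 := by
      have := congrArg (Units.val) h1
      rw [two_mul, pow_add] at this
      simpa using this
    rcases mul_self_eq_one_iff.mp h2 with h | h
    · left; ext; simpa using h
    · right; ext; simpa using h
  -- the Galois group has exactly two elements
  have hGal : Fintype.card (L ≃ₐ[K] L) = 2 := by
    rw [← Nat.card_eq_fintype_card, IsGalois.card_aut_eq_finrank, hdeg]
  obtain ⟨σ, hσ⟩ := Fintype.exists_ne_of_one_lt_card (by omega : 1 < Fintype.card (L ≃ₐ[K] L)) 1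
  have hσ2 : σ * σ = 1 := by
    have := pow_card_eq_one (x := σ)
    rwa [hGal, pow_two] at this
  have hclassify : ∀ τ : L ≃ₐ[K] L, τ = 1 ∨ τ = σ := by
    intro τ
    by_contra h
    push_neg at h
    have h3 : ({τ, σ, 1} : Finset (L ≃ₐ[K] L)).card = 3 := by
      rw [Finset.card_insert_of_notMem (by simp [h.1, h.2]),
        Finset.card_insert_of_notMem (by simp [hσ]), Finset.card_singleton]
    have h4 := Finset.card_le_univ ({τ, σ, 1} : Finset (L ≃ₐ[K] L))
    rw [h3, hGal] at h4
    omega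
  -- Galois action preserves m-th powers of units
  have hfix : ∀ (τ : L ≃ₐ[K] L) (u : Lˣ), (galUnitsHom K L τ) u ^ m = u ^ m := by
    intro τ u
    rw [← map_pow]
    rcases hpow2 u with h | h <;> rw [h]
    · exact map_one _
    · ext; show τ (((-1 : Lˣ) : L)) = ((-1 : Lˣ) : L); simp
  -- the sign character and the homomorphism Φ
  set ε : (L ≃ₐ[K] L) → Lˣ := fun τ => if τ = 1 then 1 else -1 with hε
  have hεvals : ∀ τ, ε τ = 1 ∨ ε τ = -1 := by
    intro τ; by_cases h : τ = 1 <;> simp [hε, h]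
  have hεmul : ∀ τ ρ, ε (τ * ρ) = ε τ * ε ρ := by
    intro τ ρ
    rcases hclassify τ with h1 | h1 <;> rcases hclassify ρ with h2 | h2 <;>
      simp [hε, h1, h2, hσ, hσ2]
  set Φ : (Lˣ ⋊[galUnitsHom K L] (L ≃ₐ[K] L)) →* Lˣ :=
    MonoidHom.mk' (fun g => g.left ^ m * ε g.right) (by
      intro a b
      beta_reduce
      rw [SemidirectProduct.mul_left, SemidirectProduct.mul_right, mul_pow, hfix, hεmul,
        mul_mul_mul_comm]) with hΦ
  have hΦapply : ∀ (u : Lˣ) (τ : L ≃ₐ[K] L),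
      Φ ⟨u, τ⟩ = u ^ m * ε τ := fun u τ => rfl
  -- the scalars lie in the kernel
  have hZle : ((SemidirectProduct.inl :
          Lˣ →* Lˣ ⋊[galUnitsHom K L] (L ≃ₐ[K] L)).comp
        (Units.map (algebraMap K L).toMonoidHom)).range ≤ Φ.ker := by
    rintro g ⟨c, rfl⟩
    have hdvd : (q - 1) ∣ m := by
      have hk0 : k ≠ 0 := by rintro rfl; omega
      have h2k : 2 ^ k = 2 * 2 ^ (k - 1) := by
        conv_lhs => rw [show k = 1 + (k - 1) by omega]
        rw [pow_add, pow_one]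
      refine ⟨2 ^ (k - 1), Nat.eq_of_mul_eq_mul_left two_pos ?_⟩
      calc 2 * m = q ^ 2 - 1 := hm2
        _ = (q - 1) * (q + 1) := hfact
        _ = (q - 1) * (2 * 2 ^ (k - 1)) := by rw [← h2k, ← hk]
        _ = 2 * ((q - 1) * 2 ^ (k - 1)) := by ring
    have hcm : c ^ m = 1 := by
      obtain ⟨t, ht⟩ := hdvd
      have hcK : c ^ (q - 1) = 1 := by
        rw [← hq, ← Fintype.card_units]; exact pow_card_eq_one
      rw [ht, pow_mul, hcK, one_pow]
    have : Φ (SemidirectProduct.inl (Units.map (algebraMap K L).toMonoidHom c)) = 1 := by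
      rw [show (SemidirectProduct.inl (Units.map (algebraMap K L).toMonoidHom c) :
        Lˣ ⋊[galUnitsHom K L] (L ≃ₐ[K] L)) = ⟨Units.map (algebraMap K L).toMonoidHom c, 1⟩ from rfl,
        hΦapply, ← map_pow, hcm, map_one, one_mul]
      simp [hε]
    exact this
  -- cardinalities
  have eG : (Lˣ ⋊[galUnitsHom K L] (L ≃ₐ[K] L)) ≃ Lˣ × (L ≃ₐ[K] L) :=
    ⟨fun g => (g.left, g.right), fun p => ⟨p.1, p.2⟩, fun g => rfl, fun p => rfl⟩
  haveI : Finite (Lˣ ⋊[galUnitsHom K L] (L ≃ₐ[K] L)) := Finite.of_equiv _ eG.symm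
  have hcardG : Nat.card (Lˣ ⋊[galUnitsHom K L] (L ≃ₐ[K] L)) = (q ^ 2 - 1) * 2 := by
    rw [Nat.card_congr eG, Nat.card_prod, Nat.card_eq_fintype_card, Nat.card_eq_fintype_card,
      hcardLx, hGal]
  have hrange2 : Nat.card Φ.range = 2 := by
    rw [Nat.card_eq_two_iff]
    refine ⟨⟨1, 1, map_one Φ⟩, ⟨-1, ⟨1, σ⟩, ?_⟩, ?_, ?_⟩
    · rw [hΦapply, one_pow, one_mul]; simp [hε, hσ]
    · intro h
      exact hnegu (by simpa using (congrArg Subtype.val h).symm)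
    · rw [Set.eq_univ_iff_forall]
      rintro ⟨v, g, rfl⟩
      have : Φ g = 1 ∨ Φ g = -1 := by
        rw [show Φ g = g.left ^ m * ε g.right from rfl]
        rcases hpow2 g.left with h1 | h1 <;> rcases hεvals g.right with h2 | h2 <;>
          rw [h1, h2] <;> simp
      rcases this with h | h
      · left; exact Subtype.ext h
      · right; exact Subtype.ext h
  have hcardA : Nat.card Φ.ker = q ^ 2 - 1 := by
    have h1 := Subgroup.card_mul_index Φ.ker
    rw [Subgroup.index_ker, hrange2, hcardG] at h1
    omega
  refine ⟨Φ.ker, hZle, ?_, hcardA, ?_, ?_⟩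
  · -- nilpotency
    have hψinj : Function.Injective ((SemidirectProduct.inl :
          Lˣ →* Lˣ ⋊[galUnitsHom K L] (L ≃ₐ[K] L)).comp
        (Units.map (algebraMap K L).toMonoidHom)) :=
      SemidirectProduct.inl_injective.comp (Units.map_injective (algebraMap K L).injective)
    have hZcent : ((SemidirectProduct.inl :
          Lˣ →* Lˣ ⋊[galUnitsHom K L] (L ≃ₐ[K] L)).comp
        (Units.map (algebraMap K L).toMonoidHom)).range ≤
        Subgroup.center (Lˣ ⋊[galUnitsHom K L] (L ≃ₐ[K] L)) := by
      rintro g ⟨c, rfl⟩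
      rw [Subgroup.mem_center_iff]
      intro g'
      have hfixc : (galUnitsHom K L) g'.right (Units.map (algebraMap K L).toMonoidHom c) =
          Units.map (algebraMap K L).toMonoidHom c := by
        ext; exact g'.right.commutes c
      apply SemidirectProduct.ext
      · show g'.left * (galUnitsHom K L) g'.right (Units.map (algebraMap K L).toMonoidHom c) =
          Units.map (algebraMap K L).toMonoidHom c * (galUnitsHom K L) 1 g'.left
        rw [hfixc, map_one]
        exact mul_comm _ _
      · show g'.right * 1 = 1 * g'.right
        rw [mul_one, one_mul]
    haveI hZnormal : ((SemidirectProduct.inl :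
          Lˣ →* Lˣ ⋊[galUnitsHom K L] (L ≃ₐ[K] L)).comp
        (Units.map (algebraMap K L).toMonoidHom)).range.Normal := by
      constructor
      intro n hn g
      have hcomm := Subgroup.mem_center_iff.mp (hZcent hn) g
      rw [show g * n * g⁻¹ = n by rw [hcomm]; group]
      exact hn
    set f : Φ.ker →* (Lˣ ⋊[galUnitsHom K L] (L ≃ₐ[K] L)) ⧸
        ((SemidirectProduct.inl :
          Lˣ →* Lˣ ⋊[galUnitsHom K L] (L ≃ₐ[K] L)).comp
        (Units.map (algebraMap K L).toMonoidHom)).range :=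
      (QuotientGroup.mk' _).comp Φ.ker.subtype with hf
    have hkerf : ∀ a : Φ.ker, a ∈ f.ker ↔ (a : Lˣ ⋊[galUnitsHom K L] (L ≃ₐ[K] L)) ∈
        ((SemidirectProduct.inl :
          Lˣ →* Lˣ ⋊[galUnitsHom K L] (L ≃ₐ[K] L)).comp
        (Units.map (algebraMap K L).toMonoidHom)).range := by
      intro a
      rw [MonoidHom.mem_ker, hf, MonoidHom.comp_apply, QuotientGroup.mk'_apply,
        QuotientGroup.eq_one_iff]
      rfl
    have hker : f.ker ≤ Subgroup.center Φ.ker := by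
      intro a ha
      rw [Subgroup.mem_center_iff]
      intro b
      exact Subtype.ext (Subgroup.mem_center_iff.mp (hZcent ((hkerf a).mp ha)) b)
    have hkereq : f.ker = (((SemidirectProduct.inl :
          Lˣ →* Lˣ ⋊[galUnitsHom K L] (L ≃ₐ[K] L)).comp
        (Units.map (algebraMap K L).toMonoidHom)).range).subgroupOf Φ.ker := by
      ext a
      rw [hkerf, Subgroup.mem_subgroupOf]
    have hcardker : Nat.card f.ker = q - 1 := by
      rw [hkereq, Nat.card_congr (Subgroup.subgroupOfEquivOfLe hZle).toEquiv,
        ← Nat.card_congr (MonoidHom.ofInjective hψinj).toEquiv, Nat.card_eq_fintype_card,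
        Fintype.card_units, hq]
    have hcardrangef : Nat.card f.range = q + 1 := by
      have h1 := Subgroup.card_eq_card_quotient_mul_card_subgroup f.ker
      rw [Nat.card_congr (QuotientGroup.quotientKerEquivRange f).toEquiv, hcardA, hcardker,
        hfact] at h1
      have hq1 : 0 < q - 1 := by omega
      have h2 : (q + 1) * (q - 1) = Nat.card f.range * (q - 1) := by
        rw [mul_comm (q + 1), ← h1, mul_comm]
      exact (Nat.eq_of_mul_eq_mul_right hq1 h2).symm
    haveI : Fact (Nat.Prime 2) := ⟨Nat.prime_two⟩
    have hpg : IsPGroup 2 f.range := IsPGroup.of_card (by rw [hcardrangef, hk])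
    haveI := hpg.isNilpotent
    exact isNilpotent_of_ker_le_center f.rangeRestrict
      (by rw [MonoidHom.ker_rangeRestrict]; exact hker)
  · -- not contained in the canonical copy of Lˣ
    obtain ⟨a, ha⟩ := FiniteField.exists_nonsquare (F := L) hchar
    have ha0 : a ≠ 0 := by rintro rfl; exact ha ⟨0, by simp⟩
    have ham : a ^ m ≠ 1 := by
      intro h
      apply ha
      rw [FiniteField.isSquare_iff hchar ha0, hcardL,
        show q ^ 2 / 2 = m by omega]
      exact h
    have hζm : (Units.mk0 a ha0) ^ m = -1 := by
      rcases hpow2 (Units.mk0 a ha0) with h | h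
      · exact absurd (by simpa using congrArg Units.val h) ham
      · exact h
    have hgmem : (⟨Units.mk0 a ha0, σ⟩ : Lˣ ⋊[galUnitsHom K L] (L ≃ₐ[K] L)) ∈ Φ.ker := by
      rw [MonoidHom.mem_ker, hΦapply, hζm]
      simp [hε, hσ]
    intro hle
    obtain ⟨u, hu⟩ := hle hgmem
    have := congrArg SemidirectProduct.right hu
    rw [SemidirectProduct.right_inl] at this
    exact hσ this.symm
  · -- transitivity on lines
    intro x y hx hy
    set x' : Lˣ := Units.mk0 x hx
    set y' : Lˣ := Units.mk0 y hy
    rcases hpow2 (y' * x'⁻¹) with h | h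
    · refine ⟨⟨y' * x'⁻¹, 1⟩, ?_, ?_⟩
      · rw [MonoidHom.mem_ker, hΦapply, h]
        simp [hε]
      · have : ((y' * x'⁻¹ : Lˣ) : L) * (1 : L ≃ₐ[K] L) x = y := by
          show ((y' * x'⁻¹ : Lˣ) : L) * x = y
          simp [x', y', hx]
        rw [this]
    · refine ⟨⟨y' * ((galUnitsHom K L σ) x')⁻¹, σ⟩, ?_, ?_⟩
      · rw [MonoidHom.mem_ker, hΦapply]
        have : (y' * ((galUnitsHom K L σ) x')⁻¹) ^ m = -1 := by
          rw [mul_pow, inv_pow, hfix, ← inv_pow, ← mul_pow]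
          exact h
        rw [this]
        simp [hε, hσ]
      · have hσx : σ x ≠ 0 := by
          intro h0
          exact hx (by simpa using congrArg σ.symm h0)
        have : ((y' * ((galUnitsHom K L σ) x')⁻¹ : Lˣ) : L) * σ x = y := by
          have hcoe : (((galUnitsHom K L σ) x' : Lˣ) : L) = σ x := rfl
          rw [Units.val_mul, Units.val_inv_eq_inv_val, hcoe]
          show (y' : L) * (σ x)⁻¹ * σ x = y
          rw [inv_mul_cancel_right₀ hσx]
          rfl
        rw [this]
end
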